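/- arXiv:1806.05207 — 4 statements merged into one kernel-verified Lean document; each statement's English description precedes it below -/
import Mathlib

section
/- The series ∑_{k=0}^∞ ((1/2)_k / k!)³ converges and equals Γ(1/4)⁴ / (4π³). (This is the value C_D(-1/2) = ₃F₂(1/2,1/2,1/2;1,1;1) of the interpolated Apéry numbers for ζ(2) at x = -1/2, equal to (Γ(1/4)²/(2π^{3/2}))².) -/
open Finset Real Filter MeasureTheory

noncomputable def aa (i : ℕ) : ℝ := (∏ j ∈ Finset.range i, ((1:ℝ)/4 + j)) / (Nat.factorial i)
noncomputable def cc (i : ℕ) : ℝ := aa i ^ 2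

lemma aa_zero : aa 0 = 1 := by simp [aa]

lemma aa_pos (i : ℕ) : 0 < aa i := by
  apply div_pos
  · exact Finset.prod_pos fun j _ => by positivity
  · exact_mod_cast Nat.factorial_pos i

lemma aa_succ (i : ℕ) : aa (i+1) = aa i * (((i:ℝ) + 1/4)/((i:ℝ)+1)) := by
  unfold aa
  rw [Finset.prod_range_succ, Nat.factorial_succ]
  push_cast
  field_simp
  ring

lemma cc_pos (i : ℕ) : 0 < cc i := pow_pos (aa_pos i) 2

lemma aa_le_one (i : ℕ) : aa i ≤ 1 := by
  induction i with
  | zero => simp [aa_zero]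
  | succ n ih =>
      rw [aa_succ]
      have h1 : ((n:ℝ) + 1/4)/((n:ℝ)+1) ≤ 1 := by
        rw [div_le_one (by positivity)]; linarith
      calc aa n * (((n:ℝ) + 1/4)/((n:ℝ)+1)) ≤ 1 * 1 := by
            apply mul_le_mul ih h1 (by positivity) zero_le_one
        _ = 1 := by ring


set_option maxHeartbeats 1000000 in
lemma certScal (x w : ℝ) (hx1 : x+1 ≠ 0) (hw1 : w+1 ≠ 0) (hw4 : w+1/4 ≠ 0)
    (hw3 : w-3/4 ≠ 0) :
    (2*(x+w)+2)^3 * ((w + 1/4)/(w+1))^2 - (2*(x+w)+1)^3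
    = ((x+1)^2 * (-3+26*(x+1)-64*(x+1)^2+32*(x+1)^3-27*(x+w)+136*(x+w)*(x+1)
          -112*(x+w)*(x+1)^2-72*(x+w)^2+128*(x+w)^2*(x+1)-48*(x+w)^3)
        / (2*(w-3/4)^2) * ((x + 1/4)/(x+1))^2)
      - (x^2 * (-3+26*x-64*x^2+32*x^3-27*(x+w)+136*(x+w)*x-112*(x+w)*x^2
          -72*(x+w)^2+128*(x+w)^2*x-48*(x+w)^3)
        / (2*(w+1/4)^2)) * ((w + 1/4)/(w+1))^2 := by
  rw [div_pow, div_pow, div_mul_div_comm, div_mul_div_comm, ← mul_div_assoc,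
    div_sub' (pow_ne_zero 2 hw1),
    div_sub_div _ _ (by positivity) (by positivity),
    div_eq_div_iff (by positivity) (by positivity)]
  ring

noncomputable def PP (k i : ℝ) : ℝ :=
  -3+26*i-64*i^2+32*i^3-27*k+136*k*i-112*k*i^2-72*k^2+128*k^2*i-48*k^3

noncomputable def gg (k i : ℕ) : ℝ :=
  (i:ℝ)^2 * PP k i / (2*((k:ℝ)-(i:ℝ)+1/4)^2) * (aa i * aa (k+1-i))^2

lemma y_ne_34 (y : ℕ) : (y:ℝ) - 3/4 ≠ 0 := by
  intro h
  have : (y:ℝ) = 3/4 := by linarith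
  have h4 : ((4*y : ℕ) : ℝ) = 3 := by push_cast; linarith
  have : (4*y : ℕ) = 3 := by exact_mod_cast h4
  omega

set_option maxHeartbeats 1000000 in
lemma cert (k i : ℕ) (h : i ≤ k) :
    (2*(k:ℝ)+2)^3 * (cc i * cc (k+1-i)) - (2*(k:ℝ)+1)^3 * (cc i * cc (k-i))
      = gg k (i+1) - gg k i := by
  obtain ⟨y, rfl⟩ : ∃ y, k = i + y := ⟨k - i, by omega⟩
  unfold cc gg PP
  have e1 : i + y + 1 - i = y + 1 := by omega
  have e2 : i + y - i = y := by omega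
  have e3 : i + y + 1 - (i + 1) = y := by omega
  rw [e1, e2, e3, aa_succ y, aa_succ i]
  have hx1 : ((i:ℝ))+1 ≠ 0 := by positivity
  have hw1 : ((y:ℝ))+1 ≠ 0 := by positivity
  have hw4 : ((y:ℝ))+1/4 ≠ 0 := by positivity
  have hw3 : ((y:ℝ))-3/4 ≠ 0 := y_ne_34 y
  have key := certScal (i:ℝ) (y:ℝ) hx1 hw1 hw4 hw3
  push_cast
  have c1 : (i:ℝ) + (y:ℝ) - (i:ℝ) + 1/4 = (y:ℝ) + 1/4 := by ring
  have c2 : (i:ℝ) + (y:ℝ) - ((i:ℝ)+1) + 1/4 = (y:ℝ) - 3/4 := by ring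
  rw [c1, c2]
  linear_combination (aa i * aa y)^2 * key

noncomputable def dd (k : ℕ) : ℝ :=
  ((∏ j ∈ Finset.range k, ((1 : ℝ) / 2 + j)) / (Nat.factorial k : ℝ)) ^ 3

noncomputable def ee (k : ℕ) : ℝ := ∑ i ∈ Finset.range (k+1), cc i * cc (k-i)

lemma cc_zero : cc 0 = 1 := by simp [cc, aa_zero]

lemma gg_zero (k : ℕ) : gg k 0 = 0 := by simp [gg]

lemma gg_top (k : ℕ) : gg k (k+1) = -((2*(k:ℝ)+2)^3 * (cc (k+1) * cc 0)) := by
  have e : k + 1 - (k+1) = 0 := Nat.sub_self _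
  unfold gg cc
  rw [e, aa_zero]
  have hp : PP (k:ℝ) ((k:ℝ)+1) = -9*((k:ℝ)+1) := by unfold PP; ring
  push_cast
  rw [hp]
  have h34 : (k:ℝ) - ((k:ℝ)+1) + 1/4 = -(3/4) := by ring
  rw [h34]
  ring

lemma rec_ee (k : ℕ) : (2*(k:ℝ)+2)^3 * ee (k+1) = (2*(k:ℝ)+1)^3 * ee k := by
  have tel : ∑ i ∈ Finset.range (k+1), (gg k (i+1) - gg k i) = gg k (k+1) - gg k 0 :=
    Finset.sum_range_sub (fun i => gg k i) (k+1)
  have hsum : ∑ i ∈ Finset.range (k+1),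
      ((2*(k:ℝ)+2)^3 * (cc i * cc (k+1-i)) - (2*(k:ℝ)+1)^3 * (cc i * cc (k-i)))
      = gg k (k+1) - gg k 0 := by
    rw [← tel]
    exact Finset.sum_congr rfl fun i hi => cert k i (by
      have := Finset.mem_range.mp hi; omega)
  rw [Finset.sum_sub_distrib, ← Finset.mul_sum, ← Finset.mul_sum] at hsum
  have h1 : ee (k+1) = (∑ i ∈ Finset.range (k+1), cc i * cc (k+1-i)) + cc (k+1) * cc 0 := by
    unfold ee
    rw [Finset.sum_range_succ, Nat.sub_self]
  rw [gg_top, gg_zero] at hsum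
  rw [h1]
  unfold ee
  linarith [hsum]

lemma ee_eq_dd (k : ℕ) : ee k = dd k := by
  induction k with
  | zero => simp [ee, dd, cc_zero]
  | succ n ih =>
      have h2 : (2*(n:ℝ)+2)^3 * dd (n+1) = (2*(n:ℝ)+1)^3 * dd n := by
        unfold dd
        rw [Finset.prod_range_succ, Nat.factorial_succ]
        have hfac : ((Nat.factorial n : ℝ)) ≠ 0 := by
          exact_mod_cast Nat.factorial_ne_zero n
        have hn1 : ((n:ℝ)+1) ≠ 0 := by positivity
        push_cast
        field_simp
        ring
      have h1 := rec_ee n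
      rw [ih] at h1
      have hne : (2*(n:ℝ)+2)^3 ≠ 0 := by positivity
      have := h1.trans h2.symm
      exact mul_left_cancel₀ hne this


noncomputable def ss (n : ℕ) (t : ℝ) : ℝ := ∑ i ∈ Finset.range n, aa i * t^i
noncomputable def DD (n : ℕ) (t : ℝ) : ℝ := ∑ i ∈ Finset.range n, aa i * ((i:ℝ) * t^(i-1))

lemma hasDerivAt_ss (n : ℕ) (t : ℝ) : HasDerivAt (ss n) (DD n t) t := by
  unfold ss DD
  exact HasDerivAt.fun_sum fun i _ => (hasDerivAt_pow i t).const_mul (aa i)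

lemma ss_at_zero (n : ℕ) : ss (n+1) 0 = 1 := by
  unfold ss
  rw [Finset.sum_eq_single_of_mem 0 (Finset.mem_range.mpr (Nat.succ_pos n))]
  · simp [aa_zero]
  · intro i _ hi
    simp [zero_pow hi]

lemma ode (n : ℕ) (t : ℝ) :
    (1-t) * DD (n+1) t - ss (n+1) t / 4 = -(((n:ℝ)+1/4)) * aa n * t^n := by
  induction n with
  | zero => simp [ss, DD, aa_zero]
  | succ n ih =>
      have key : aa (n+1) * ((n:ℝ)+1) = aa n * ((n:ℝ)+1/4) := by
        rw [aa_succ]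
        have : ((n:ℝ)+1) ≠ 0 := by positivity
        field_simp
      have hD : DD (n+1+1) t = DD (n+1) t + aa (n+1) * (((n:ℝ)+1) * t^n) := by
        unfold DD
        rw [Finset.sum_range_succ, Nat.add_sub_cancel]
        push_cast
        ring
      have hS : ss (n+1+1) t = ss (n+1) t + aa (n+1) * t^(n+1) := by
        unfold ss
        rw [Finset.sum_range_succ]
      rw [hD, hS]
      push_cast
      linear_combination ih + (1-t) * t^n * key + t^(n+1) * key

lemma hasDerivAt_G {u : ℝ} (hu : u < 1) (n : ℕ) :
    HasDerivAt (fun x => (1-x)^((1:ℝ)/4) * ss (n+1) x)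
      (-(((n:ℝ)+1/4) * aa n * u^n * (1-u)^(-(3:ℝ)/4))) u := by
  have h1u : (0:ℝ) < 1 - u := by linarith
  have hinner : HasDerivAt (fun x : ℝ => 1 - x) (-1) u := (hasDerivAt_id u).const_sub 1
  have hrpow : HasDerivAt (fun x : ℝ => (1-x)^((1:ℝ)/4))
      ((1/4) * (1-u)^((1:ℝ)/4-1) * (-1)) u := by
    exact (Real.hasDerivAt_rpow_const (x := 1-u) (p := (1:ℝ)/4) (Or.inl h1u.ne')).comp u hinner
  have hprod := hrpow.fun_mul (hasDerivAt_ss (n+1) u)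
  refine hprod.congr_deriv ?_
  symm
  have e1 : (1:ℝ)/4 - 1 = -(3:ℝ)/4 := by norm_num
  have e2 : (1-u)^((1:ℝ)/4) = (1-u) * (1-u)^(-(3:ℝ)/4) := by
    rw [show ((1:ℝ)/4) = 1 + (-(3:ℝ)/4) by norm_num, Real.rpow_add h1u, Real.rpow_one]
  rw [e1, e2]
  have hode := ode n u
  linear_combination (-(1-u)^(-(3:ℝ)/4)) * hode

lemma G_est {t : ℝ} (h0 : 0 ≤ t) (h1 : t < 1) (n : ℕ) :
    |(1-t)^((1:ℝ)/4) * ss (n+1) t - 1| ≤ (((n:ℝ)+1/4) * t^n * (1-t)^(-(3:ℝ)/4)) * t := by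
  have key := norm_image_sub_le_of_norm_deriv_le_segment'
    (f := fun x => (1-x)^((1:ℝ)/4) * ss (n+1) x)
    (f' := fun u => -(((n:ℝ)+1/4) * aa n * u^n * (1-u)^(-(3:ℝ)/4)))
    (a := 0) (b := t)
    (C := ((n:ℝ)+1/4) * t^n * (1-t)^(-(3:ℝ)/4))
    (fun u hu => (hasDerivAt_G (lt_of_le_of_lt hu.2 h1) n).hasDerivWithinAt)
    ?_ t (Set.right_mem_Icc.mpr h0)
  · simpa [ss_at_zero, Real.norm_eq_abs] using key
  · intro u hu
    obtain ⟨hu0, hut⟩ := hu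
    have hu1 : u < 1 := lt_trans hut h1
    have h1u : (0:ℝ) < 1 - u := by linarith
    have h1t : (0:ℝ) < 1 - t := by linarith
    have haan := (aa_pos n).le
    rw [Real.norm_eq_abs, abs_neg, abs_of_nonneg (mul_nonneg (mul_nonneg
      (mul_nonneg (by positivity) haan) (by positivity)) (by positivity))]
    have b1 : aa n ≤ 1 := aa_le_one n
    have b2 : u^n ≤ t^n := pow_le_pow_left₀ hu0 (le_of_lt hut) n
    have b3 : (1-u)^(-(3:ℝ)/4) ≤ (1-t)^(-(3:ℝ)/4) := by
      rw [show (-(3:ℝ)/4) = -((3:ℝ)/4) by norm_num, Real.rpow_neg h1u.le,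
        Real.rpow_neg h1t.le]
      apply inv_anti₀ (by positivity)
      exact Real.rpow_le_rpow h1t.le (by linarith) (by norm_num)
    calc ((n:ℝ)+1/4) * aa n * u^n * (1-u)^(-(3:ℝ)/4)
        ≤ ((n:ℝ)+1/4) * 1 * t^n * (1-t)^(-(3:ℝ)/4) := by
          gcongr
      _ = ((n:ℝ)+1/4) * t^n * (1-t)^(-(3:ℝ)/4) := by ring

lemma hasSum_aa_pow {t : ℝ} (h0 : 0 ≤ t) (h1 : t < 1) :
    HasSum (fun i => aa i * t^i) ((1-t)^(-((1:ℝ)/4))) := by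
  have hsummable : Summable (fun i => aa i * t^i) := by
    apply Summable.of_nonneg_of_le (fun i => mul_nonneg (aa_pos i).le (by positivity))
      (fun i => mul_le_of_le_one_left (by positivity) (aa_le_one i))
    exact summable_geometric_of_lt_one h0 h1
  have htend1 : Filter.Tendsto (fun n => ∑ i ∈ Finset.range n, aa i * t^i)
      Filter.atTop (nhds (∑' i, aa i * t^i)) := hsummable.hasSum.tendsto_sum_nat
  have htend2 : Filter.Tendsto (fun n => ss (n+1) t) Filter.atTop
      (nhds (∑' i, aa i * t^i)) := by
    exact htend1.comp (Filter.tendsto_add_atTop_nat 1)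
  -- show G n → 1
  have hC : Filter.Tendsto (fun n : ℕ => (((n:ℝ)+1/4) * t^n * (1-t)^(-(3:ℝ)/4)) * t)
      Filter.atTop (nhds 0) := by
    have hn : Filter.Tendsto (fun n : ℕ => ((n:ℝ)+1/4) * t^n) Filter.atTop (nhds 0) := by
      have ha : Filter.Tendsto (fun n : ℕ => (n:ℝ) * t^n) Filter.atTop (nhds 0) := by
        have := (summable_pow_mul_geometric_of_norm_lt_one 1
          (show ‖t‖ < 1 by rwa [Real.norm_eq_abs, abs_of_nonneg h0])).tendsto_atTop_zero
        simpa using this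
      have hb : Filter.Tendsto (fun n : ℕ => (1/4:ℝ) * t^n) Filter.atTop (nhds 0) := by
        simpa using (tendsto_pow_atTop_nhds_zero_of_lt_one h0 h1).const_mul (1/4:ℝ)
      have := ha.add hb
      simpa [add_mul] using this
    have := (hn.mul_const ((1-t)^(-(3:ℝ)/4))).mul_const t
    simpa using this
  have hG : Filter.Tendsto (fun n => (1-t)^((1:ℝ)/4) * ss (n+1) t) Filter.atTop (nhds 1) := by
    have hz : Filter.Tendsto (fun n => (1-t)^((1:ℝ)/4) * ss (n+1) t - 1)
        Filter.atTop (nhds 0) := by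
      apply squeeze_zero_norm (fun n => G_est h0 h1 n) hC
    have := hz.add_const 1
    simpa using this
  have h1t : (0:ℝ) < 1 - t := by linarith
  have hG2 : Filter.Tendsto (fun n => ss (n+1) t) Filter.atTop
      (nhds ((1-t)^(-((1:ℝ)/4)))) := by
    have hne : (1-t)^((1:ℝ)/4) ≠ 0 := by positivity
    have := hG.const_mul (((1-t)^((1:ℝ)/4))⁻¹)
    simp only [← mul_assoc, inv_mul_cancel₀ hne, one_mul, mul_one] at this
    convert this using 2
    rw [show (-((1:ℝ)/4)) = -((1:ℝ)/4) by norm_num, Real.rpow_neg h1t.le]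
  have := tendsto_nhds_unique htend2 hG2
  rw [← this]
  exact hsummable.hasSum

lemma complex_real_eq {u v x : ℝ} (hx : x ∈ Set.Ioo (0:ℝ) 1) :
    (x:ℂ) ^ ((u:ℂ)-1) * ((1:ℂ)-x) ^ ((v:ℂ)-1)
      = ((x ^ (u-1) * (1-x) ^ (v-1) : ℝ) : ℂ) := by
  obtain ⟨h0, h1⟩ := hx
  rw [Complex.ofReal_mul,
    Complex.ofReal_cpow h0.le, Complex.ofReal_cpow (by linarith : (0:ℝ) ≤ 1 - x)]
  push_cast
  ring_nf

lemma betaIntegrable {u v : ℝ} (hu : 0 < u) (hv : 0 < v) :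
    IntegrableOn (fun x : ℝ => x ^ (u-1) * (1-x) ^ (v-1)) (Set.Ioo 0 1) := by
  have h := Complex.betaIntegral_convergent (u := (u:ℂ)) (v := (v:ℂ)) (by simpa) (by simpa)
  have h2 : IntegrableOn (fun x : ℝ => (x:ℂ) ^ ((u:ℂ)-1) * ((1:ℂ)-x) ^ ((v:ℂ)-1))
      (Set.Ioc 0 1) := by
    rw [intervalIntegrable_iff_integrableOn_Ioc_of_le zero_le_one] at h
    exact h
  have h3 := (h2.mono_set Set.Ioo_subset_Ioc_self).re
  refine MeasureTheory.IntegrableOn.congr_fun h3 ?_ measurableSet_Ioo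
  intro x hx
  show RCLike.re ((x:ℂ) ^ ((u:ℂ)-1) * ((1:ℂ)-(x:ℂ)) ^ ((v:ℂ)-1)) = x ^ (u-1) * (1-x) ^ (v-1)
  rw [RCLike.re_to_complex, complex_real_eq hx, Complex.ofReal_re]

lemma realBeta {u v : ℝ} (hu : 0 < u) (hv : 0 < v) :
    ∫ x in Set.Ioo (0:ℝ) 1, x ^ (u-1) * (1-x) ^ (v-1)
      = Real.Gamma u * Real.Gamma v / Real.Gamma (u+v) := by
  have hC := Complex.Gamma_mul_Gamma_eq_betaIntegral
    (s := (u:ℂ)) (t := (v:ℂ)) (by simpa) (by simpa)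
  have hbeta : Complex.betaIntegral (u:ℂ) (v:ℂ)
      = ((∫ x in Set.Ioo (0:ℝ) 1, x ^ (u-1) * (1-x) ^ (v-1) : ℝ) : ℂ) := by
    unfold Complex.betaIntegral
    rw [intervalIntegral.integral_of_le zero_le_one, integral_Ioc_eq_integral_Ioo]
    calc ∫ x in Set.Ioo (0:ℝ) 1, (x:ℂ) ^ ((u:ℂ)-1) * ((1:ℂ)-x) ^ ((v:ℂ)-1)
        = ∫ x in Set.Ioo (0:ℝ) 1, ((x ^ (u-1) * (1-x) ^ (v-1) : ℝ) : ℂ) :=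
          setIntegral_congr_fun measurableSet_Ioo (fun x hx => complex_real_eq hx)
      _ = _ := integral_ofReal
  rw [hbeta] at hC
  have hguv : Real.Gamma (u+v) ≠ 0 := (Real.Gamma_pos_of_pos (by linarith)).ne'
  rw [show ((u:ℂ)+(v:ℂ)) = (((u+v:ℝ)):ℂ) by push_cast; ring] at hC
  rw [Complex.Gamma_ofReal, Complex.Gamma_ofReal, Complex.Gamma_ofReal] at hC
  have hreal : Real.Gamma u * Real.Gamma v
      = Real.Gamma (u+v) * ∫ x in Set.Ioo (0:ℝ) 1, x ^ (u-1) * (1-x) ^ (v-1) := by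
    exact_mod_cast hC
  rw [hreal]
  field_simp

lemma Gamma_shift (n : ℕ) : Real.Gamma ((n:ℝ) + 1/4)
    = (∏ j ∈ Finset.range n, ((1:ℝ)/4 + j)) * Real.Gamma (1/4) := by
  induction n with
  | zero => simp
  | succ m ih =>
      have h1 : ((m+1:ℕ):ℝ) + 1/4 = ((m:ℝ) + 1/4) + 1 := by push_cast; ring
      rw [h1, Real.Gamma_add_one (by positivity), ih, Finset.prod_range_succ]
      ring

lemma term_int (i : ℕ) :
    ∫ x in Set.Ioo (0:ℝ) 1, x ^ (((i:ℝ) + 1/4) - 1) * (1-x) ^ ((3:ℝ)/4 - 1)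
      = aa i * (Real.Gamma (1/4) * Real.Gamma (3/4)) := by
  rw [realBeta (by positivity) (by norm_num : (0:ℝ) < 3/4)]
  have h1 : (i:ℝ) + 1/4 + 3/4 = ((i:ℝ) + 1) := by ring
  rw [h1, Gamma_shift i]
  rw [Real.Gamma_nat_eq_factorial]
  have hfac : ((Nat.factorial i : ℝ)) ≠ 0 := by exact_mod_cast Nat.factorial_ne_zero i
  unfold aa
  field_simp

lemma hasSum_cc : HasSum cc (Real.sqrt π / Real.Gamma (3/4)^2) := by
  set μ := volume.restrict (Set.Ioo (0:ℝ) 1) with hμ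
  set φ : ℕ → ℝ → ℝ := fun i x => aa i * (x ^ (((i:ℝ) + 1/4) - 1) * (1-x) ^ ((3:ℝ)/4 - 1))
    with hφ
  set K := Real.Gamma (1/4) * Real.Gamma (3/4) with hK
  set L := Real.Gamma (1/4) * Real.Gamma (1/2) / Real.Gamma (3/4) with hL
  have hKpos : 0 < K := mul_pos (Real.Gamma_pos_of_pos (by norm_num))
    (Real.Gamma_pos_of_pos (by norm_num))
  have hLpos : 0 < L := by
    apply div_pos (mul_pos (Real.Gamma_pos_of_pos (by norm_num))
      (Real.Gamma_pos_of_pos (by norm_num))) (Real.Gamma_pos_of_pos (by norm_num))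
  have hmeas : ∀ i : ℕ, AEMeasurable (fun x => ENNReal.ofReal (φ i x)) μ := by
    intro i
    apply Measurable.aemeasurable
    apply ENNReal.measurable_ofReal.comp
    apply Measurable.const_mul
    exact ((by fun_prop : Measurable (fun x : ℝ => x ^ (((i:ℝ) + 1/4) - 1))).mul
      (by fun_prop : Measurable (fun x : ℝ => (1-x) ^ ((3:ℝ)/4 - 1))))
  -- each term
  have h1 : ∀ i : ℕ, ∫⁻ x, ENNReal.ofReal (φ i x) ∂μ = ENNReal.ofReal (cc i * K) := by
    intro i
    rw [← ofReal_integral_eq_lintegral_ofReal]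
    · congr 1
      rw [hφ]
      simp only []
      rw [integral_const_mul, term_int i]
      unfold cc
      ring
    · apply Integrable.const_mul
      exact betaIntegrable (by positivity) (by norm_num : (0:ℝ) < 3/4)
    · rw [hμ, EventuallyLE, ae_restrict_iff' measurableSet_Ioo]
      apply Filter.Eventually.of_forall
      intro x hx
      have hx0 := hx.1
      have hx1 := hx.2
      have : (0:ℝ) ≤ x ^ (((i:ℝ) + 1/4) - 1) * (1-x) ^ ((3:ℝ)/4 - 1) :=
        mul_nonneg (Real.rpow_nonneg hx0.le _) (Real.rpow_nonneg (by linarith) _)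
      simp only [Pi.zero_apply]
      exact mul_nonneg (aa_pos i).le this
  -- pointwise sum
  have h2 : ∀ x ∈ Set.Ioo (0:ℝ) 1, (∑' i, ENNReal.ofReal (φ i x))
      = ENNReal.ofReal (x ^ ((1:ℝ)/4 - 1) * (1-x) ^ ((1:ℝ)/2 - 1)) := by
    intro x hx
    obtain ⟨hx0, hx1⟩ := hx
    have h1x : (0:ℝ) < 1 - x := by linarith
    have hb := hasSum_aa_pow hx0.le hx1
    set km := x ^ (-(3:ℝ)/4) * (1-x) ^ (-((1:ℝ)/4)) with hkm
    have hkm0 : 0 ≤ km := mul_nonneg (Real.rpow_nonneg hx0.le _) (Real.rpow_nonneg h1x.le _)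
    have hbm := hb.mul_left km
    have hphi : ∀ i : ℕ, φ i x = km * (aa i * x^i) := by
      intro i
      rw [hφ, hkm]
      simp only []
      rw [show ((i:ℝ) + 1/4) - 1 = (-(3:ℝ)/4) + (i:ℕ) by push_cast; ring]
      rw [Real.rpow_add hx0, Real.rpow_natCast]
      rw [show (3:ℝ)/4 - 1 = -((1:ℝ)/4) by norm_num]
      ring
    have hval : km * ((1-x) ^ (-((1:ℝ)/4)))
        = x ^ ((1:ℝ)/4 - 1) * (1-x) ^ ((1:ℝ)/2 - 1) := by
      rw [hkm, mul_assoc, ← Real.rpow_add h1x]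
      norm_num
    have hsum2 : HasSum (fun i => φ i x) (x ^ ((1:ℝ)/4 - 1) * (1-x) ^ ((1:ℝ)/2 - 1)) := by
      rw [← hval]
      exact hbm.congr_fun (fun i => hphi i)
    rw [← hsum2.tsum_eq]
    rw [ENNReal.ofReal_tsum_of_nonneg]
    · intro i
      rw [hphi i]
      exact mul_nonneg hkm0 (mul_nonneg (aa_pos i).le (by positivity))
    · exact hsum2.summable
  -- rhs integral
  have h3 : ∫⁻ x, ENNReal.ofReal (x ^ ((1:ℝ)/4 - 1) * (1-x) ^ ((1:ℝ)/2 - 1)) ∂μ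
      = ENNReal.ofReal L := by
    rw [← ofReal_integral_eq_lintegral_ofReal]
    · rw [hμ]
      rw [show ∫ x in Set.Ioo (0:ℝ) 1, x ^ ((1:ℝ)/4 - 1) * (1-x) ^ ((1:ℝ)/2 - 1)
          = Real.Gamma (1/4) * Real.Gamma (1/2) / Real.Gamma (1/4 + 1/2) from
          realBeta (by norm_num) (by norm_num)]
      rw [hL]
      norm_num
    · exact betaIntegrable (by norm_num) (by norm_num)
    · rw [hμ, EventuallyLE, ae_restrict_iff' measurableSet_Ioo]
      apply Filter.Eventually.of_forall
      intro x hx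
      simp only [Pi.zero_apply]
      exact mul_nonneg (Real.rpow_nonneg hx.1.le _) (Real.rpow_nonneg (by linarith [hx.2]) _)
  -- combine
  have key : (∑' i, ENNReal.ofReal (cc i * K)) = ENNReal.ofReal L := by
    calc (∑' i, ENNReal.ofReal (cc i * K)) = ∑' i, ∫⁻ x, ENNReal.ofReal (φ i x) ∂μ := by
          exact tsum_congr (fun i => (h1 i).symm)
      _ = ∫⁻ x, (∑' i, ENNReal.ofReal (φ i x)) ∂μ := (lintegral_tsum hmeas).symm
      _ = ∫⁻ x, ENNReal.ofReal (x ^ ((1:ℝ)/4 - 1) * (1-x) ^ ((1:ℝ)/2 - 1)) ∂μ := by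
          apply lintegral_congr_ae
          filter_upwards [ae_restrict_mem measurableSet_Ioo] with x hx using h2 x hx
      _ = ENNReal.ofReal L := h3
  -- summability
  have hsummable : Summable (fun i => cc i * K) := by
    apply summable_of_sum_range_le (c := L)
      (fun i => mul_nonneg (cc_pos i).le hKpos.le)
    intro n
    have : ENNReal.ofReal (∑ i ∈ Finset.range n, cc i * K)
        ≤ ENNReal.ofReal L := by
      rw [ENNReal.ofReal_sum_of_nonneg (fun i _ => mul_nonneg (cc_pos i).le hKpos.le)]
      rw [← key]
      exact ENNReal.sum_le_tsum (Finset.range n)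
    rwa [ENNReal.ofReal_le_ofReal_iff hLpos.le] at this
  have hval : (∑' i, cc i * K) = L := by
    have h4 : ENNReal.ofReal (∑' i, cc i * K) = ENNReal.ofReal L := by
      rw [ENNReal.ofReal_tsum_of_nonneg (fun i => mul_nonneg (cc_pos i).le hKpos.le) hsummable]
      exact key
    have h5 : (0:ℝ) ≤ ∑' i, cc i * K :=
      tsum_nonneg (fun i => mul_nonneg (cc_pos i).le hKpos.le)
    rwa [ENNReal.ofReal_eq_ofReal_iff h5 hLpos.le] at h4
  have hccsum : Summable cc := by
    have := hsummable.div_const K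
    apply this.congr
    intro i
    field_simp
  have : (∑' i, cc i) = L / K := by
    rw [← hval, tsum_mul_right]
    field_simp
  have hfinal : L / K = Real.sqrt π / Real.Gamma (3/4)^2 := by
    rw [hL, hK, Real.Gamma_one_half_eq]
    have hq : Real.Gamma (3/4) ≠ 0 := (Real.Gamma_pos_of_pos (by norm_num)).ne'
    have hq4 : Real.Gamma (1/4) ≠ 0 := (Real.Gamma_pos_of_pos (by norm_num)).ne'
    field_simp
  rw [← hfinal, ← this]
  exact hccsum.hasSum


lemma cc_nonneg' (i : ℕ) : ‖cc i‖ = cc i := by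
  rw [Real.norm_eq_abs, abs_of_nonneg (cc_pos i).le]

/-- The series `∑_{k=0}^∞ ((1/2)_k / k!)³` converges and equals `Γ(1/4)⁴ / (4π³)`.
This is the value `C_D(-1/2) = ₃F₂(1/2,1/2,1/2;1,1;1)` of the interpolated Apéry
numbers for `ζ(2)` at `x = -1/2`. -/
theorem stmt_0 :
    HasSum (fun k : ℕ =>
      ((∏ j ∈ Finset.range k, ((1 : ℝ) / 2 + j)) / (Nat.factorial k : ℝ)) ^ 3)
      (Real.Gamma (1 / 4) ^ 4 / (4 * Real.pi ^ 3)) := by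
  have hcc := hasSum_cc
  have hccn : Summable (fun i => ‖cc i‖) := by
    apply hcc.summable.congr
    intro i
    exact (cc_nonneg' i).symm
  have hprod := hasSum_sum_range_mul_of_summable_norm hccn hccn
  rw [hcc.tsum_eq] at hprod
  have heq : (fun n => ∑ k ∈ Finset.range (n+1), cc k * cc (n-k)) = dd := by
    funext n
    exact ee_eq_dd n
  rw [heq] at hprod
  have hG : Real.Gamma (3/4) ≠ 0 := (Real.Gamma_pos_of_pos (by norm_num)).ne'
  have hG4 : Real.Gamma (1/4) ≠ 0 := (Real.Gamma_pos_of_pos (by norm_num)).ne'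
  have hπ : Real.sqrt π * Real.sqrt π = π := Real.mul_self_sqrt Real.pi_pos.le
  have hsq2 : Real.sqrt 2 * Real.sqrt 2 = 2 := Real.mul_self_sqrt (by norm_num)
  have h34 : Real.Gamma (1/4) * Real.Gamma (3/4) = Real.sqrt 2 * π := by
    have hrefl := Real.Gamma_mul_Gamma_one_sub (1/4)
    rw [show (1:ℝ) - 1/4 = 3/4 by norm_num, show π * (1/4:ℝ) = π/4 by ring,
      Real.sin_pi_div_four] at hrefl
    rw [hrefl]
    have hs2 : Real.sqrt 2 ≠ 0 := by positivity
    field_simp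
    linear_combination (-1) * hsq2
  have hpow : Real.Gamma (1/4) ^ 4 * Real.Gamma (3/4) ^ 4 = 4 * π^4 := by
    have : (Real.Gamma (1/4) * Real.Gamma (3/4))^4 = (Real.sqrt 2 * π)^4 := by rw [h34]
    calc Real.Gamma (1/4) ^ 4 * Real.Gamma (3/4) ^ 4
        = (Real.Gamma (1/4) * Real.Gamma (3/4))^4 := by ring
      _ = (Real.sqrt 2 * π)^4 := by rw [h34]
      _ = (Real.sqrt 2 * Real.sqrt 2)^2 * π^4 := by ring
      _ = 4 * π^4 := by rw [hsq2]; norm_num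
  have hfinal : (Real.sqrt π / Real.Gamma (3/4)^2) * (Real.sqrt π / Real.Gamma (3/4)^2)
      = Real.Gamma (1/4) ^ 4 / (4 * π ^ 3) := by
    rw [div_mul_div_comm, hπ]
    rw [div_eq_div_iff (by positivity) (by positivity)]
    linear_combination -hpow
  rw [hfinal] at hprod
  exact hprod
end

section
/- Let p be a prime with p ≡ 3 (mod 4) and set n = (p-1)/2. Then p divides C_B(n) = ∑_{k=0}^{⌊n/3⌋} (-1)^k 3^{n-3k} binom(n,3k) (3k)!/(k!)³. -/
open Finset

namespace Zagier10

variable {p : ℕ} [Fact p.Prime]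

private lemma sum_pow_eq_zero {e : ℕ} (h : e < p - 1) : ∑ x : ZMod p, x ^ e = 0 :=
  FiniteField.sum_pow_lt_card_sub_one (K := ZMod p) e (by rwa [ZMod.card])

private lemma sum_pow_card_sub_one : ∑ x : ZMod p, x ^ (p - 1) = -1 := by
  have hp1 : 1 ≤ p - 1 := by
    have := (Fact.out : p.Prime).two_le; omega
  have h1 : ∀ x : ZMod p, x ^ (p - 1) = 1 - (if x = 0 then 1 else 0) := by
    intro x
    by_cases hx : x = 0
    · simp [hx, zero_pow (by omega : p - 1 ≠ 0)]
    · simp [hx, ZMod.pow_card_sub_one_eq_one hx]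
  rw [Finset.sum_congr rfl fun x _ => h1 x, Finset.sum_sub_distrib]
  rw [Finset.sum_const, Finset.sum_ite_eq' Finset.univ (0 : ZMod p) (fun _ => (1 : ZMod p))]
  simp [Finset.card_univ, ZMod.card, ZMod.natCast_self]

end Zagier10

namespace Zagier10

variable {p : ℕ} [Fact p.Prime]

private lemma sum_pow_X {n e : ℕ} (h2n : p - 1 = 2 * n) (hn1 : 1 ≤ n)
    (he1 : n ≤ e) (he2 : e ≤ 3 * n) :
    ∑ x : ZMod p, x ^ e = if e = 2 * n then -1 else 0 := by
  rcases lt_trichotomy e (2 * n) with h | h | h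
  · rw [if_neg (by omega), sum_pow_eq_zero (by omega)]
  · rw [if_pos h, h, ← h2n, sum_pow_card_sub_one]
  · rw [if_neg (by omega)]
    have he : ∀ x : ZMod p, x ^ e = x ^ (e - 2 * n) := by
      intro x
      by_cases hx : x = 0
      · rw [hx, zero_pow (by omega), zero_pow (by omega)]
      · have : x ^ e = x ^ (e - 2 * n) * (x ^ (p - 1)) := by
          rw [h2n, ← pow_add]; congr 1; omega
        rw [this, ZMod.pow_card_sub_one_eq_one hx, mul_one]
    rw [Finset.sum_congr rfl fun x _ => he x, sum_pow_eq_zero (by omega)]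

end Zagier10

namespace Zagier10

variable {p : ℕ} [Fact p.Prime]

private lemma two_ne_zero' (hp2 : p ≠ 2) : (2 : ZMod p) ≠ 0 := by
  have : ((2 : ℕ) : ZMod p) ≠ 0 := by
    rw [Ne, ZMod.natCast_eq_zero_iff]
    exact fun h => hp2 ((Nat.prime_dvd_prime_iff_eq Fact.out Nat.prime_two).mp h)
  simpa using this

private lemma sq_pow_n {n : ℕ} (h2n : p - 1 = 2 * n) (c a : ZMod p) (hc : c ≠ 0) :
    (c ^ 2 * a) ^ n = a ^ n := by
  rw [mul_pow, ← pow_mul, mul_comm 2 n, pow_mul, ← pow_mul, mul_comm n 2, ← h2n,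
    ZMod.pow_card_sub_one_eq_one hc, one_mul]

private lemma card_sqrt (hp2 : p ≠ 2) {n : ℕ} (h2n : p - 1 = 2 * n) (hn1 : 1 ≤ n) (s : ZMod p) :
    ((Finset.univ.filter fun x : ZMod p => x ^ 2 = s).card : ZMod p) = 1 + s ^ n := by
  have hpn : p / 2 = n := by
    have := (Fact.out : p.Prime).two_le; omega
  by_cases hs : s = 0
  · have : (Finset.univ.filter fun x : ZMod p => x ^ 2 = s) = {0} := by
      ext x; simp [hs, pow_eq_zero_iff]
    rw [this, hs, zero_pow (by omega : n ≠ 0)]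
    simp
  · by_cases hsq : IsSquare s
    · obtain ⟨b, hb⟩ := hsq
      have hbne : b ≠ 0 := by rintro rfl; simp at hb; exact hs hb
      have hbne' : b ≠ -b := by
        intro h
        have : (2 : ZMod p) * b = 0 := by
          rw [two_mul]; nth_rewrite 1 [h]; ring
        rcases mul_eq_zero.mp this with h' | h'
        · exact two_ne_zero' hp2 h'
        · exact hbne h'
      have : (Finset.univ.filter fun x : ZMod p => x ^ 2 = s) = {b, -b} := by
        ext x
        simp only [Finset.mem_filter, Finset.mem_univ, true_and, Finset.mem_insert,
          Finset.mem_singleton, hb]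
        rw [pow_two]
        exact mul_self_eq_mul_self_iff
      rw [this, Finset.card_insert_of_notMem (by simpa using hbne'), Finset.card_singleton]
      have : s ^ n = 1 := by
        rw [← hpn]; exact (ZMod.euler_criterion p hs).mp ⟨b, hb⟩
      rw [this]; norm_num
    · have : (Finset.univ.filter fun x : ZMod p => x ^ 2 = s) = ∅ := by
        ext x
        simp only [Finset.mem_filter, Finset.mem_univ, true_and, Finset.notMem_empty,
          iff_false]
        intro h
        exact hsq ⟨x, by rw [← h, pow_two]⟩
      rw [this]
      have h1 : s ^ n * s ^ n = 1 := by
        rw [← pow_add, ← two_mul, ← mul_comm n 2, mul_comm n 2, ← h2n]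
        exact ZMod.pow_card_sub_one_eq_one hs
      rcases mul_self_eq_one_iff.mp h1 with h' | h'
      · exact absurd ((ZMod.euler_criterion p hs).mpr (by rwa [hpn])) hsq
      · rw [h']; simp

private lemma sum_sq_transform {n : ℕ} (hp2 : p ≠ 2) (h2n : p - 1 = 2 * n) (hn1 : 1 ≤ n)
    (G : ZMod p → ZMod p) :
    ∑ x : ZMod p, G (x ^ 2) = ∑ s : ZMod p, (1 + s ^ n) * G s := by
  have := Finset.sum_fiberwise (Finset.univ : Finset (ZMod p)) (fun x => x ^ 2)
    (fun x => G (x ^ 2))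
  rw [← this]
  refine Finset.sum_congr rfl fun s _ => ?_
  have : ∑ x ∈ Finset.univ.filter fun x : ZMod p => x ^ 2 = s, G (x ^ 2)
      = ∑ x ∈ Finset.univ.filter fun x : ZMod p => x ^ 2 = s, G s := by
    refine Finset.sum_congr rfl fun x hx => ?_
    rw [(Finset.mem_filter.mp hx).2]
  rw [this, Finset.sum_const, nsmul_eq_mul, card_sqrt hp2 h2n hn1 s]

end Zagier10

namespace Zagier10

variable {p : ℕ} [Fact p.Prime]

private lemma nat_cast_prime_ne_zero (hpq : p ≠ 2) (q : ℕ) (hq : q.Prime) (hne : p ≠ q) :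
    ((q : ℕ) : ZMod p) ≠ 0 := by
  rw [Ne, ZMod.natCast_eq_zero_iff]
  exact fun h => hne ((Nat.prime_dvd_prime_iff_eq Fact.out hq).mp h)

private lemma four_ne_zero (hp2 : p ≠ 2) : (4 : ZMod p) ≠ 0 := by
  have h2 := two_ne_zero' (p := p) hp2
  intro h
  have : (2 : ZMod p) * 2 = 0 := by norm_num at h ⊢; linear_combination h
  rcases mul_eq_zero.mp this with h' | h' <;> exact h2 h'

private lemma three_ne_zero' (hp2 : p ≠ 2) (hp3 : p ≠ 3) : (3 : ZMod p) ≠ 0 := by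
  have := nat_cast_prime_ne_zero hp2 3 (by norm_num) hp3
  simpa using this

private lemma four_pow (hp2 : p ≠ 2) {n : ℕ} (h2n : p - 1 = 2 * n) : (4 : ZMod p) ^ n = 1 := by
  have : (4 : ZMod p) = 2 ^ 2 := by norm_num
  rw [this, ← pow_mul, mul_comm 2 n, pow_mul, ← pow_mul, mul_comm n 2, ← h2n]
  exact ZMod.pow_card_sub_one_eq_one (two_ne_zero' hp2)

/-- inner slice function -/
private def Ee (p : ℕ) [Fact p.Prime] (w v : ZMod p) : ZMod p :=
  v * (w * v - 1) * (((w - 3) / 2) ^ 2 - v)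

private def Aa (p n : ℕ) [Fact p.Prime] (w : ZMod p) : ZMod p :=
  ∑ v : ZMod p, (Ee p w v) ^ n

private lemma A_flip (hp2 : p ≠ 2) {n : ℕ} (h2n : p - 1 = 2 * n) (hodd : Odd n)
    {w : ZMod p} (hw0 : w ≠ 0) (hw4 : w ≠ 4) : Aa p n (4 - w) = - Aa p n w := by
  have h4w : (4 : ZMod p) - w ≠ 0 := sub_ne_zero.mpr (Ne.symm hw4)
  have hk : -w / (4 - w) ≠ 0 := div_ne_zero (neg_ne_zero.mpr hw0) h4w
  set e : ZMod p ≃ ZMod p :=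
    (Equiv.mulLeft₀ (-w / (4 - w)) hk).trans (Equiv.addRight ((4 - w)⁻¹)) with he
  have hev : ∀ v : ZMod p, e v = -w / (4 - w) * v + (4 - w)⁻¹ := fun v => rfl
  have key : ∀ v : ZMod p, Ee p (4 - w) (e v) = -((w / (4 - w)) ^ 2 * Ee p w v) := by
    intro v
    rw [hev, Ee, Ee]
    have h2 := two_ne_zero' (p := p) hp2
    have h4 := four_ne_zero (p := p) hp2
    field_simp
    ring
  have hwk : w / (4 - w) ≠ 0 := div_ne_zero hw0 h4w
  calc Aa p n (4 - w) = ∑ v : ZMod p, (Ee p (4 - w) (e v)) ^ n :=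
        (Equiv.sum_comp e fun v => (Ee p (4 - w) v) ^ n).symm
    _ = ∑ v : ZMod p, -((Ee p w v) ^ n) := by
        refine Finset.sum_congr rfl fun v _ => ?_
        rw [key v, Odd.neg_pow hodd, sq_pow_n h2n _ _ hwk]
    _ = - Aa p n w := by rw [Aa, Finset.sum_neg_distrib]

end Zagier10

namespace Zagier10

variable {p : ℕ} [Fact p.Prime]

private lemma sum_tt (hp2 : p ≠ 2) {n : ℕ} (h2n : p - 1 = 2 * n) (hn1 : 1 ≤ n) :
    ∑ t : ZMod p, (t * (t - 1)) ^ n = -1 := by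
  have h0 : ((0 : ZMod p) * (0 - 1)) ^ n = 0 := by
    rw [zero_mul, zero_pow (by omega : n ≠ 0)]
  rw [← Finset.sum_erase (f := fun t : ZMod p => (t * (t - 1)) ^ n) (a := 0) Finset.univ h0]
  have step : ∑ t ∈ Finset.univ.erase (0 : ZMod p), (t * (t - 1)) ^ n
      = ∑ s ∈ Finset.univ.erase (1 : ZMod p), s ^ n := by
    refine Finset.sum_nbij' (fun t => 1 - t⁻¹) (fun s => (1 - s)⁻¹) ?_ ?_ ?_ ?_ ?_
    · intro t ht
      have ht0 : t ≠ 0 := Finset.ne_of_mem_erase ht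
      refine Finset.mem_erase.mpr ⟨?_, Finset.mem_univ _⟩
      intro h
      have : t⁻¹ = 0 := by linear_combination -h
      exact ht0 (inv_eq_zero.mp this)
    · intro s hs
      have hs1 : s ≠ 1 := Finset.ne_of_mem_erase hs
      refine Finset.mem_erase.mpr ⟨?_, Finset.mem_univ _⟩
      exact inv_ne_zero (sub_ne_zero.mpr (Ne.symm hs1))
    · intro t ht
      show (1 - (1 - t⁻¹))⁻¹ = t
      have h1 : 1 - (1 - t⁻¹) = t⁻¹ := by ring
      rw [h1, inv_inv]
    · intro s hs
      show 1 - ((1 - s)⁻¹)⁻¹ = s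
      rw [inv_inv]; ring
    · intro t ht
      have ht0 : t ≠ 0 := Finset.ne_of_mem_erase ht
      have : t * (t - 1) = t ^ 2 * (1 - t⁻¹) := by field_simp
      rw [this, sq_pow_n h2n _ _ ht0]
  rw [step]
  have e3 := Finset.add_sum_erase Finset.univ (fun s : ZMod p => s ^ n)
    (Finset.mem_univ (1 : ZMod p))
  have hz : ∑ s : ZMod p, s ^ n = 0 := by
    have := sum_pow_X (p := p) h2n hn1 (le_refl n) (by omega)
    rwa [if_neg (by omega)] at this
  simp only [one_pow] at e3
  linear_combination e3 + hz

private lemma A_zero (hp2 : p ≠ 2) (hp3 : p ≠ 3) {n : ℕ} (h2n : p - 1 = 2 * n) (hn1 : 1 ≤ n) :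
    Aa p n 0 = -1 := by
  have h2 := two_ne_zero' (p := p) hp2
  have h3 := three_ne_zero' (p := p) hp2 hp3
  have hc : (3 : ZMod p) / 2 ≠ 0 := div_ne_zero h3 h2
  have hc2 : ((3 : ZMod p) / 2) ^ 2 ≠ 0 := pow_ne_zero _ hc
  have reidx : Aa p n 0 = ∑ t : ZMod p, (Ee p 0 (((3 : ZMod p) / 2) ^ 2 * t)) ^ n :=
    (Equiv.sum_comp (Equiv.mulLeft₀ _ hc2) fun v => (Ee p 0 v) ^ n).symm
  rw [reidx]
  have key : ∀ t : ZMod p, Ee p 0 (((3 : ZMod p) / 2) ^ 2 * t)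
      = (((3 : ZMod p) / 2) ^ 2) ^ 2 * (t * (t - 1)) := by
    intro t
    rw [Ee]
    field_simp
    ring
  calc ∑ t : ZMod p, (Ee p 0 (((3 : ZMod p) / 2) ^ 2 * t)) ^ n
      = ∑ t : ZMod p, (t * (t - 1)) ^ n := by
        refine Finset.sum_congr rfl fun t _ => ?_
        rw [key t, sq_pow_n h2n _ _ hc2]
    _ = -1 := sum_tt hp2 h2n hn1

private lemma A_four (hp2 : p ≠ 2) {n : ℕ} (h2n : p - 1 = 2 * n) (hn1 : 1 ≤ n) (hodd : Odd n) :
    Aa p n 4 = 1 := by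
  have h2 := two_ne_zero' (p := p) hp2
  have h4 := four_ne_zero (p := p) hp2
  have hinv2 : (2 : ZMod p)⁻¹ ≠ 0 := inv_ne_zero h2
  have key : ∀ v : ZMod p, Ee p 4 v = -(((2 : ZMod p)⁻¹) ^ 2 * (v * (4 * v - 1) ^ 2)) := by
    intro v
    rw [Ee]
    field_simp
    ring
  have term : ∀ v : ZMod p, (Ee p 4 v) ^ n = -(if v = (4 : ZMod p)⁻¹ then 0 else v ^ n) := by
    intro v
    rw [key v, Odd.neg_pow hodd, sq_pow_n h2n _ _ hinv2]
    by_cases hv : v = (4 : ZMod p)⁻¹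
    · rw [if_pos hv, hv]
      have : (4 : ZMod p) * (4 : ZMod p)⁻¹ - 1 = 0 := by
        rw [mul_inv_cancel₀ h4]; ring
      rw [this]
      simp [zero_pow (show n ≠ 0 by omega)]
    · rw [if_neg hv]
      have hne : (4 : ZMod p) * v - 1 ≠ 0 := by
        intro h
        apply hv
        have : (4 : ZMod p) * v = 1 := by linear_combination h
        field_simp [eq_inv_iff_mul_eq_one]
        linear_combination this
      rw [mul_pow, ← pow_mul, mul_comm 2 n, mul_comm n 2, ← h2n,
        ZMod.pow_card_sub_one_eq_one hne, mul_one]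
  have hz : ∑ s : ZMod p, s ^ n = 0 := by
    have := sum_pow_X (p := p) h2n hn1 (le_refl n) (by omega)
    rwa [if_neg (by omega)] at this
  calc Aa p n 4 = ∑ v : ZMod p, -(if v = (4 : ZMod p)⁻¹ then 0 else v ^ n) :=
        Finset.sum_congr rfl fun v _ => term v
    _ = -(∑ v : ZMod p, (if v = (4 : ZMod p)⁻¹ then 0 else v ^ n)) := by
        rw [Finset.sum_neg_distrib]
    _ = 1 := by
        have e1 : ∑ v : ZMod p, (if v = (4 : ZMod p)⁻¹ then 0 else v ^ n)
            = ∑ v ∈ Finset.univ.erase ((4 : ZMod p)⁻¹),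
                (if v = (4 : ZMod p)⁻¹ then 0 else v ^ n) := by
          rw [Finset.sum_erase (f := fun v : ZMod p => if v = (4 : ZMod p)⁻¹ then 0 else v ^ n) (a := (4 : ZMod p)⁻¹) Finset.univ (by simp)]
        rw [e1]
        have e2 : ∑ v ∈ Finset.univ.erase ((4 : ZMod p)⁻¹),
            (if v = (4 : ZMod p)⁻¹ then 0 else v ^ n)
            = ∑ v ∈ Finset.univ.erase ((4 : ZMod p)⁻¹), v ^ n := by
          refine Finset.sum_congr rfl fun v hv => ?_
          rw [if_neg (Finset.ne_of_mem_erase hv)]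
        rw [e2]
        have e3 := Finset.add_sum_erase Finset.univ (fun s : ZMod p => s ^ n)
          (Finset.mem_univ ((4 : ZMod p)⁻¹))
        rw [hz] at e3
        have e4 : ((4 : ZMod p)⁻¹) ^ n = 1 := by
          rw [inv_pow, four_pow hp2 h2n, inv_one]
        have : ∑ v ∈ Finset.univ.erase ((4 : ZMod p)⁻¹), v ^ n = -1 := by
          simp only [e4] at e3
          linear_combination e3
        rw [this]; norm_num

end Zagier10

namespace Zagier10

variable {p : ℕ} [Fact p.Prime]

private lemma stageD (hp2 : p ≠ 2) (hp3 : p ≠ 3) {n : ℕ} (h2n : p - 1 = 2 * n)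
    (hn1 : 1 ≤ n) (hodd : Odd n) :
    ∑ w : ZMod p, Aa p n w = 0 := by
  have h2 := two_ne_zero' (p := p) hp2
  have h4 := four_ne_zero (p := p) hp2
  have h04 : (0 : ZMod p) ≠ 4 := fun h => h4 h.symm
  have hsub : ({0, 4} : Finset (ZMod p)) ⊆ Finset.univ := Finset.subset_univ _
  rw [← Finset.sum_sdiff hsub]
  have hmain : ∑ w ∈ Finset.univ \ {0, 4}, Aa p n w = 0 := by
    refine Finset.sum_involution (fun w _ => 4 - w) ?_ ?_ ?_ ?_
    · intro a ha
      simp only [Finset.mem_sdiff, Finset.mem_insert, Finset.mem_singleton, not_or] at ha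
      rw [A_flip hp2 h2n hodd ha.2.1 ha.2.2]
      ring
    · intro a ha hne
      simp only [Finset.mem_sdiff, Finset.mem_insert, Finset.mem_singleton, not_or] at ha
      intro heq
      apply hne
      have hval := A_flip hp2 h2n hodd ha.2.1 ha.2.2
      have heq' : 4 - a = a := heq
      rw [heq'] at hval
      have : (2 : ZMod p) * Aa p n a = 0 := by linear_combination hval
      rcases mul_eq_zero.mp this with h' | h'
      · exact absurd h' h2
      · exact h'
    · intro a ha
      simp only [Finset.mem_sdiff, Finset.mem_insert, Finset.mem_singleton, not_or,
        Finset.mem_univ, true_and] at ha ⊢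
      constructor
      · intro h
        exact ha.2 (by linear_combination -h)
      · intro h
        exact ha.1 (by linear_combination -h)
    · intro a ha
      ring
  rw [hmain, zero_add]
  rw [Finset.sum_pair h04, A_zero hp2 hp3 h2n hn1, A_four hp2 h2n hn1 hodd]
  ring

end Zagier10

namespace Zagier10

variable {p : ℕ} [Fact p.Prime]

private def Gg (p n : ℕ) [Fact p.Prime] (u v : ZMod p) : ZMod p :=
  (((3 + u) * v - 1) * v) ^ n

private lemma stageBC (hp2 : p ≠ 2) {n : ℕ} (h2n : p - 1 = 2 * n) (hn1 : 1 ≤ n) :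
    ∑ x : ZMod p, ∑ y : ZMod p, (((3 + x + y) * (x * y) - 1) * (x * y)) ^ n
      = ∑ w : ZMod p, Aa p n w := by
  have h2 := two_ne_zero' (p := p) hp2
  have step1 : ∀ x : ZMod p,
      ∑ y : ZMod p, (((3 + x + y) * (x * y) - 1) * (x * y)) ^ n
        = ∑ u : ZMod p, Gg p n u (x * (u - x)) := by
    intro x
    refine Fintype.sum_equiv (Equiv.addLeft x) _ _ fun y => ?_
    show (((3 + x + y) * (x * y) - 1) * (x * y)) ^ n
        = Gg p n (x + y) (x * ((x + y) - x))
    rw [Gg]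
    congr 2 <;> ring
  have step3 : ∀ u : ZMod p,
      ∑ x : ZMod p, Gg p n u (x * (u - x))
        = ∑ v : ZMod p, (1 + ((u / 2) ^ 2 - v) ^ n) * Gg p n u v := by
    intro u
    have s3a : ∑ x : ZMod p, Gg p n u (x * (u - x))
        = ∑ t : ZMod p, Gg p n u ((u / 2) ^ 2 - t ^ 2) := by
      refine (Fintype.sum_equiv (Equiv.addRight (u / 2)) _ _ fun t => ?_).symm
      show Gg p n u ((u / 2) ^ 2 - t ^ 2) = Gg p n u ((t + u / 2) * (u - (t + u / 2)))
      congr 1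
      field_simp
      ring
    rw [s3a, sum_sq_transform hp2 h2n hn1 (fun s => Gg p n u ((u / 2) ^ 2 - s))]
    refine (Fintype.sum_equiv (Equiv.subLeft ((u / 2) ^ 2)) _ _ fun v => ?_).symm
    show (1 + ((u / 2) ^ 2 - v) ^ n) * Gg p n u v
        = (1 + ((u / 2) ^ 2 - v) ^ n) * Gg p n u ((u / 2) ^ 2 - ((u / 2) ^ 2 - v))
    rw [sub_sub_cancel]
  have split : ∀ u : ZMod p,
      ∑ v : ZMod p, (1 + ((u / 2) ^ 2 - v) ^ n) * Gg p n u v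
        = (∑ v : ZMod p, Gg p n u v)
          + ∑ v : ZMod p, ((u / 2) ^ 2 - v) ^ n * Gg p n u v := by
    intro u
    rw [← Finset.sum_add_distrib]
    refine Finset.sum_congr rfl fun v _ => by ring
  have first_zero : ∑ u : ZMod p, ∑ v : ZMod p, Gg p n u v = 0 := by
    rw [Finset.sum_comm]
    refine Finset.sum_eq_zero fun v _ => ?_
    by_cases hv : v = (0 : ZMod p)
    · refine Finset.sum_eq_zero fun u _ => ?_
      rw [Gg, hv, mul_zero, zero_pow (by omega : n ≠ 0)]
    · have hv2 : v ^ 2 ≠ 0 := pow_ne_zero 2 hv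
      set e : ZMod p ≃ ZMod p :=
        (Equiv.mulLeft₀ (v ^ 2) hv2).trans (Equiv.addRight (3 * v ^ 2 - v)) with he
      have hsum : ∑ u : ZMod p, Gg p n u v = ∑ u : ZMod p, (e u) ^ n := by
        refine Finset.sum_congr rfl fun u _ => ?_
        rw [Gg]
        congr 1
        show ((3 + u) * v - 1) * v = v ^ 2 * u + (3 * v ^ 2 - v)
        ring
      rw [hsum, Equiv.sum_comp e (fun t : ZMod p => t ^ n)]
      have := sum_pow_X (p := p) h2n hn1 (le_refl n) (by omega)
      rwa [if_neg (by omega)] at this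
  calc ∑ x : ZMod p, ∑ y : ZMod p, (((3 + x + y) * (x * y) - 1) * (x * y)) ^ n
      = ∑ x : ZMod p, ∑ u : ZMod p, Gg p n u (x * (u - x)) :=
        Finset.sum_congr rfl fun x _ => step1 x
    _ = ∑ u : ZMod p, ∑ x : ZMod p, Gg p n u (x * (u - x)) := Finset.sum_comm
    _ = ∑ u : ZMod p, ((∑ v : ZMod p, Gg p n u v)
          + ∑ v : ZMod p, ((u / 2) ^ 2 - v) ^ n * Gg p n u v) :=
        Finset.sum_congr rfl fun u _ => (step3 u).trans (split u)
    _ = (∑ u : ZMod p, ∑ v : ZMod p, Gg p n u v)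
          + ∑ u : ZMod p, ∑ v : ZMod p, ((u / 2) ^ 2 - v) ^ n * Gg p n u v :=
        Finset.sum_add_distrib
    _ = ∑ u : ZMod p, ∑ v : ZMod p, ((u / 2) ^ 2 - v) ^ n * Gg p n u v := by
        rw [first_zero, zero_add]
    _ = ∑ w : ZMod p, Aa p n w := by
        refine Fintype.sum_equiv (Equiv.addRight (3 : ZMod p)) _ _ fun u => ?_
        show ∑ v : ZMod p, ((u / 2) ^ 2 - v) ^ n * Gg p n u v = Aa p n (u + 3)
        rw [Aa]
        refine Finset.sum_congr rfl fun v _ => ?_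
        rw [Gg, Ee, ← mul_pow]
        congr 1
        ring

end Zagier10

namespace Zagier10

variable {p : ℕ} [Fact p.Prime]

private def Co (p n : ℕ) [Fact p.Prime] (d j i : ℕ) : ZMod p :=
  (-1 : ZMod p) ^ (n - d) * (3 : ZMod p) ^ (d - j)
    * ((n.choose d * d.choose j * j.choose i : ℕ) : ZMod p)

private lemma expand_term {n : ℕ} (x y : ZMod p) :
    (((3 + x + y) * (x * y) - 1) * (x * y)) ^ n
      = ∑ d ∈ Finset.range (n + 1), ∑ j ∈ Finset.range (d + 1), ∑ i ∈ Finset.range (j + 1),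
          Co p n d j i * x ^ (i + d + n) * y ^ (j - i + d + n) := by
  rw [mul_pow, sub_eq_add_neg, add_pow, Finset.sum_mul]
  refine Finset.sum_congr rfl fun d hd => ?_
  rw [mul_pow]
  rw [show (3 : ZMod p) + x + y = (x + y) + 3 by ring, add_pow]
  simp only [Finset.sum_mul]
  refine Finset.sum_congr rfl fun j hj => ?_
  rw [add_pow]
  simp only [Finset.sum_mul]
  refine Finset.sum_congr rfl fun i hi => ?_
  rw [Co]
  push_cast
  ring

private lemma stageA {n : ℕ} (h2n : p - 1 = 2 * n) (hn1 : 1 ≤ n) :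
    ∑ x : ZMod p, ∑ y : ZMod p, (((3 + x + y) * (x * y) - 1) * (x * y)) ^ n
      = ∑ k ∈ Finset.range (n / 3 + 1),
          (-1 : ZMod p) ^ k * (3 : ZMod p) ^ (n - 3 * k)
            * ((n.choose k * (n - k).choose (2 * k) * (2 * k).choose k : ℕ) : ZMod p) := by
  have key : ∑ x : ZMod p, ∑ y : ZMod p, (((3 + x + y) * (x * y) - 1) * (x * y)) ^ n
      = ∑ d ∈ Finset.range (n + 1), ∑ j ∈ Finset.range (d + 1), ∑ i ∈ Finset.range (j + 1),
          Co p n d j i * (∑ x : ZMod p, x ^ (i + d + n)) * (∑ y : ZMod p, y ^ (j - i + d + n)) := by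
    calc ∑ x : ZMod p, ∑ y : ZMod p, (((3 + x + y) * (x * y) - 1) * (x * y)) ^ n
        = ∑ x : ZMod p, ∑ y : ZMod p, ∑ d ∈ Finset.range (n + 1), ∑ j ∈ Finset.range (d + 1),
            ∑ i ∈ Finset.range (j + 1), Co p n d j i * x ^ (i + d + n) * y ^ (j - i + d + n) :=
          Finset.sum_congr rfl fun x _ => Finset.sum_congr rfl fun y _ => expand_term x y
      _ = ∑ x : ZMod p, ∑ d ∈ Finset.range (n + 1), ∑ j ∈ Finset.range (d + 1),
            ∑ i ∈ Finset.range (j + 1), ∑ y : ZMod p,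
              Co p n d j i * x ^ (i + d + n) * y ^ (j - i + d + n) :=
          Finset.sum_congr rfl fun x _ => by
            rw [Finset.sum_comm]
            refine Finset.sum_congr rfl fun d _ => ?_
            rw [Finset.sum_comm]
            refine Finset.sum_congr rfl fun j _ => ?_
            rw [Finset.sum_comm]
      _ = ∑ d ∈ Finset.range (n + 1), ∑ x : ZMod p, ∑ j ∈ Finset.range (d + 1),
            ∑ i ∈ Finset.range (j + 1), ∑ y : ZMod p,
              Co p n d j i * x ^ (i + d + n) * y ^ (j - i + d + n) := Finset.sum_comm
      _ = ∑ d ∈ Finset.range (n + 1), ∑ j ∈ Finset.range (d + 1), ∑ x : ZMod p,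
            ∑ i ∈ Finset.range (j + 1), ∑ y : ZMod p,
              Co p n d j i * x ^ (i + d + n) * y ^ (j - i + d + n) :=
          Finset.sum_congr rfl fun d _ => Finset.sum_comm
      _ = ∑ d ∈ Finset.range (n + 1), ∑ j ∈ Finset.range (d + 1), ∑ i ∈ Finset.range (j + 1),
            ∑ x : ZMod p, ∑ y : ZMod p,
              Co p n d j i * x ^ (i + d + n) * y ^ (j - i + d + n) :=
          Finset.sum_congr rfl fun d _ => Finset.sum_congr rfl fun j _ => Finset.sum_comm
      _ = ∑ d ∈ Finset.range (n + 1), ∑ j ∈ Finset.range (d + 1), ∑ i ∈ Finset.range (j + 1),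
          Co p n d j i * (∑ x : ZMod p, x ^ (i + d + n)) * (∑ y : ZMod p, y ^ (j - i + d + n)) := by
          refine Finset.sum_congr rfl fun d _ => Finset.sum_congr rfl fun j _ =>
            Finset.sum_congr rfl fun i _ => ?_
          calc ∑ x : ZMod p, ∑ y : ZMod p,
                Co p n d j i * x ^ (i + d + n) * y ^ (j - i + d + n)
              = ∑ x : ZMod p, (Co p n d j i * x ^ (i + d + n))
                  * ∑ y : ZMod p, y ^ (j - i + d + n) :=
                Finset.sum_congr rfl fun x _ => (Finset.mul_sum _ _ _).symm
            _ = (∑ x : ZMod p, Co p n d j i * x ^ (i + d + n))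
                  * ∑ y : ZMod p, y ^ (j - i + d + n) := (Finset.sum_mul _ _ _).symm
            _ = Co p n d j i * (∑ x : ZMod p, x ^ (i + d + n))
                  * (∑ y : ZMod p, y ^ (j - i + d + n)) := by
                rw [← Finset.mul_sum]
  rw [key]
  have evalX : ∀ d ∈ Finset.range (n + 1), ∀ j ∈ Finset.range (d + 1),
      ∀ i ∈ Finset.range (j + 1),
      Co p n d j i * (∑ x : ZMod p, x ^ (i + d + n)) * (∑ y : ZMod p, y ^ (j - i + d + n))
        = if i + d + n = 2 * n ∧ j - i + d + n = 2 * n then Co p n d j i else 0 := by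
    intro d hd j hj i hi
    rw [Finset.mem_range] at hd hj hi
    rw [sum_pow_X h2n hn1 (by omega) (by omega), sum_pow_X h2n hn1 (by omega) (by omega)]
    by_cases h1 : i + d + n = 2 * n <;> by_cases h2 : j - i + d + n = 2 * n <;>
      simp [h1, h2] <;> ring
  rw [Finset.sum_congr rfl fun d hd => Finset.sum_congr rfl fun j hj =>
    Finset.sum_congr rfl fun i hi => evalX d hd j hj i hi]
  rw [← Finset.sum_range_reflect]
  have collapse : ∀ k ∈ Finset.range (n + 1),
      (∑ j ∈ Finset.range ((n + 1 - 1 - k) + 1), ∑ i ∈ Finset.range (j + 1),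
        if i + (n + 1 - 1 - k) + n = 2 * n ∧ j - i + (n + 1 - 1 - k) + n = 2 * n
          then Co p n (n + 1 - 1 - k) j i else 0)
        = (-1 : ZMod p) ^ k * (3 : ZMod p) ^ (n - 3 * k)
            * ((n.choose k * (n - k).choose (2 * k) * (2 * k).choose k : ℕ) : ZMod p) := by
    intro k hk
    rw [Finset.mem_range] at hk
    have hkn : k ≤ n := by omega
    have hd : n + 1 - 1 - k = n - k := by omega
    rw [hd]  -- may fail if occurrences; fine
    have inner : ∀ j ∈ Finset.range ((n - k) + 1),
        (∑ i ∈ Finset.range (j + 1),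
          if i + (n - k) + n = 2 * n ∧ j - i + (n - k) + n = 2 * n
            then Co p n (n - k) j i else 0)
          = if j - k + (n - k) + n = 2 * n then Co p n (n - k) j k else 0 := by
      intro j hj
      rw [Finset.mem_range] at hj
      rw [Finset.sum_eq_single k]
      · by_cases hc : j - k + (n - k) + n = 2 * n
        · rw [if_pos (by omega), if_pos hc]
        · rw [if_neg (by omega), if_neg hc]
      · intro i hi hik
        rw [Finset.mem_range] at hi
        rw [if_neg (by omega)]
      · intro hki
        rw [Finset.mem_range] at hki
        rw [if_neg (by omega)]
    rw [Finset.sum_congr rfl inner]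
    rw [Finset.sum_eq_single (2 * k)]
    · rw [if_pos (by omega)]
      rw [Co]
      have e1 : n - (n - k) = k := by omega
      have e2 : (n - k) - 2 * k = n - 3 * k := by omega
      have e3 : n.choose (n - k) = n.choose k := Nat.choose_symm hkn
      rw [e1, e2, e3]
    · intro j hj hjk
      rw [Finset.mem_range] at hj
      rw [if_neg (by omega)]
    · intro h2k
      rw [Finset.mem_range] at h2k
      rw [if_pos (by omega), Co]
      have : (n - k).choose (2 * k) = 0 := Nat.choose_eq_zero_of_lt (by omega)
      rw [this]
      simp
  rw [Finset.sum_congr rfl collapse]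
  refine (Finset.sum_subset ?_ ?_).symm
  · exact Finset.range_subset_range.mpr (by omega)
  · intro k hk hks
    rw [Finset.mem_range] at hk
    rw [Finset.mem_range, not_lt] at hks
    have h3k : n < 3 * k := by omega
    have : (n - k).choose (2 * k) = 0 := Nat.choose_eq_zero_of_lt (by omega)
    rw [this]
    simp

end Zagier10

namespace Zagier10

private lemma nat_identity {n k : ℕ} (h : 3 * k ≤ n) :
    n.choose (3 * k) * ((3 * k).factorial / k.factorial ^ 3)
      = n.choose k * (n - k).choose (2 * k) * (2 * k).choose k := by
  have h1 : (3 * k).choose k * k.factorial * (2 * k).factorial = (3 * k).factorial := by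
    have := Nat.choose_mul_factorial_mul_factorial (show k ≤ 3 * k by omega)
    rwa [show 3 * k - k = 2 * k by omega] at this
  have h2 : (2 * k).choose k * k.factorial * k.factorial = (2 * k).factorial := by
    have := Nat.choose_mul_factorial_mul_factorial (show k ≤ 2 * k by omega)
    rwa [show 2 * k - k = k by omega] at this
  have hdiv : (3 * k).factorial / k.factorial ^ 3 = (3 * k).choose k * (2 * k).choose k := by
    apply Nat.div_eq_of_eq_mul_left (by positivity)
    calc (3 * k).factorial = (3 * k).choose k * k.factorial * (2 * k).factorial := h1.symm
      _ = (3 * k).choose k * k.factorial * ((2 * k).choose k * k.factorial * k.factorial) := by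
          rw [h2]
      _ = (3 * k).choose k * (2 * k).choose k * k.factorial ^ 3 := by ring
  rw [hdiv]
  have h3 := Nat.choose_mul (n := n) (show k ≤ 3 * k by omega)
  rw [show 3 * k - k = 2 * k by omega] at h3
  calc n.choose (3 * k) * ((3 * k).choose k * (2 * k).choose k)
      = n.choose (3 * k) * (3 * k).choose k * (2 * k).choose k := by ring
    _ = n.choose k * (n - k).choose (2 * k) * (2 * k).choose k := by rw [h3]

end Zagier10

/-- For primes `p ≡ 3 (mod 4)` and `n = (p-1)/2`, `p` divides
`C_B(n) = ∑_{k=0}^{⌊n/3⌋} (-1)^k 3^{n-3k} binom(n,3k) (3k)!/(k!)³`,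
Zagier's sporadic sequence B. -/
theorem stmt_10 (p : ℕ) (hp : p.Prime) (hp4 : p % 4 = 3) :
    (p : ℤ) ∣
      ∑ k ∈ Finset.range ((p - 1) / 2 / 3 + 1),
        (-1 : ℤ) ^ k * 3 ^ ((p - 1) / 2 - 3 * k) *
          (Nat.choose ((p - 1) / 2) (3 * k) : ℤ) *
          ((Nat.factorial (3 * k) / Nat.factorial k ^ 3 : ℕ) : ℤ) := by
  haveI : Fact p.Prime := ⟨hp⟩
  by_cases hp3 : p = 3
  · subst hp3
    norm_num [Finset.sum_range_one, Nat.factorial]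
  · have hple := hp.two_le
    have hp2 : p ≠ 2 := by omega
    set n : ℕ := (p - 1) / 2 with hn
    have h2n : p - 1 = 2 * n := by omega
    have hn1 : 1 ≤ n := by omega
    have hodd : Odd n := Nat.odd_iff.mpr (by omega)
    have SZ : ∑ k ∈ Finset.range (n / 3 + 1),
        (-1 : ℤ) ^ k * 3 ^ (n - 3 * k) * (Nat.choose n (3 * k) : ℤ) *
          ((Nat.factorial (3 * k) / Nat.factorial k ^ 3 : ℕ) : ℤ)
        = ∑ k ∈ Finset.range (n / 3 + 1),
        (-1 : ℤ) ^ k * 3 ^ (n - 3 * k)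
          * ((n.choose k * (n - k).choose (2 * k) * (2 * k).choose k : ℕ) : ℤ) := by
      refine Finset.sum_congr rfl fun k hk => ?_
      rw [Finset.mem_range] at hk
      have h3k : 3 * k ≤ n := by omega
      rw [mul_assoc, ← Nat.cast_mul, Zagier10.nat_identity h3k]
    rw [SZ, ← ZMod.intCast_zmod_eq_zero_iff_dvd, Int.cast_sum]
    have cast_eq : ∀ k ∈ Finset.range (n / 3 + 1),
        (((-1 : ℤ) ^ k * 3 ^ (n - 3 * k)
            * ((n.choose k * (n - k).choose (2 * k) * (2 * k).choose k : ℕ) : ℤ) : ℤ) : ZMod p)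
          = (-1 : ZMod p) ^ k * (3 : ZMod p) ^ (n - 3 * k)
            * ((n.choose k * (n - k).choose (2 * k) * (2 * k).choose k : ℕ) : ZMod p) := by
      intro k _
      push_cast
      ring
    rw [Finset.sum_congr rfl cast_eq, ← Zagier10.stageA h2n hn1,
      Zagier10.stageBC hp2 h2n hn1, Zagier10.stageD hp2 hp3 h2n hn1 hodd]
end

section
/- For every x ∈ ℂ with Re(x) > -1, the series C_D(x) = ∑_{k=0}^∞ binom(x,k)² binom(x+k,k) converges absolutely, and C_D satisfies the homogeneous functional equation (x+2)² C_D(x+2) − (11x² + 33x + 25) C_D(x+1) − (x+1)² C_D(x) = 0 for all x ∈ ℂ with Re(x) > -1. -/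
/-- The summand `binom(x,k)² binom(x+k,k)` of the interpolated Apéry series for
`ζ(2)`, where `binom(x,k) = (∏_{j=0}^{k-1}(x-j))/k!` and
`binom(x+k,k) = (∏_{j=1}^{k}(x+j))/k!`. -/
noncomputable def aperyTerm2 (x : ℂ) (k : ℕ) : ℂ :=
  ((∏ j ∈ Finset.range k, (x - j)) / (Nat.factorial k : ℂ)) ^ 2 *
    ((∏ j ∈ Finset.range k, (x + (j + 1))) / (Nat.factorial k : ℂ))

/-- The interpolated Apéry numbers for `ζ(2)`:
`C_D(x) = ∑_{k≥0} binom(x,k)² binom(x+k,k)`. -/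
noncomputable def CD (x : ℂ) : ℂ := ∑' k : ℕ, aperyTerm2 x k

lemma prodP_shift (y : ℂ) (n : ℕ) :
    ∏ j ∈ Finset.range (n + 1), (y + 1 - (j : ℂ)) =
      (y + 1) * ∏ j ∈ Finset.range n, (y - (j : ℂ)) := by
  rw [Finset.prod_range_succ']
  simp only [Nat.cast_zero, Nat.cast_add, Nat.cast_one]
  rw [mul_comm]
  congr 1
  · ring_nf
  · apply Finset.prod_congr rfl
    intro j _
    ring

lemma prodQ_shift (y : ℂ) (n : ℕ) :
    (y + 1) * ∏ j ∈ Finset.range n, (y + 1 + ((j : ℂ) + 1)) =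
      ∏ j ∈ Finset.range (n + 1), (y + ((j : ℂ) + 1)) := by
  rw [Finset.prod_range_succ']
  simp only [Nat.cast_zero, Nat.cast_add, Nat.cast_one]
  rw [mul_comm]
  congr 1
  · apply Finset.prod_congr rfl
    intro j _
    ring
  · ring

lemma aperyTerm2_ratio (x : ℂ) (k : ℕ) :
    aperyTerm2 x (k + 1) =
      aperyTerm2 x k * (((x - (k : ℂ)) / ((k : ℂ) + 1)) ^ 2 *
        ((x + ((k : ℂ) + 1)) / ((k : ℂ) + 1))) := by
  have hk : ((k : ℂ) + 1) ≠ 0 := by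
    have : ((k + 1 : ℕ) : ℂ) ≠ 0 := Nat.cast_ne_zero.2 (by omega)
    push_cast at this; exact this
  have hf : ((Nat.factorial k : ℂ)) ≠ 0 := Nat.cast_ne_zero.2 (Nat.factorial_ne_zero k)
  unfold aperyTerm2
  rw [Finset.prod_range_succ, Finset.prod_range_succ, Nat.factorial_succ]
  push_cast
  field_simp




noncomputable def Mp (x : ℂ) (k : ℕ) : ℂ :=
  (1 + x) * (k : ℂ) ^ 2 + (7 + 13 * x + 6 * x ^ 2) * (k : ℂ)
    - (30 + 67 * x + 48 * x ^ 2 + 11 * x ^ 3)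

noncomputable def Gc (x : ℂ) : ℕ → ℂ
  | 0 => 0
  | 1 => -(11 * x ^ 2 + 31 * x + 22)
  | (m + 2) =>
      Mp x (m + 2) * (x + (m : ℂ) + 2) * (∏ j ∈ Finset.range m, (x - (j : ℂ))) ^ 2 *
        (∏ j ∈ Finset.range (m + 1), (x + ((j : ℂ) + 1))) / ((Nat.factorial (m + 1) : ℂ)) ^ 3

lemma Gc_eq (x : ℂ) (m : ℕ) :
    Gc x (m + 2) = Mp x (m + 2) * (x + (m : ℂ) + 2) * (x + (m : ℂ) + 1) *
      aperyTerm2 x m / ((m : ℂ) + 1) ^ 3 := by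
  have hm : ((m : ℂ) + 1) ≠ 0 := by
    have : ((m + 1 : ℕ) : ℂ) ≠ 0 := Nat.cast_ne_zero.2 (by omega)
    push_cast at this; exact this
  have hf : ((Nat.factorial m : ℂ)) ≠ 0 := Nat.cast_ne_zero.2 (Nat.factorial_ne_zero m)
  show (_ / _ : ℂ) = _
  rw [Finset.prod_range_succ, Nat.factorial_succ]
  unfold aperyTerm2
  push_cast
  field_simp
  ring

set_option maxHeartbeats 1000000 in
lemma tele (x : ℂ) (hx1 : x + 1 ≠ 0) (hx2 : x + 2 ≠ 0) (k : ℕ) :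
    (x + 2) ^ 2 * aperyTerm2 (x + 2) k - (11 * x ^ 2 + 33 * x + 25) * aperyTerm2 (x + 1) k -
      (x + 1) ^ 2 * aperyTerm2 x k = Gc x (k + 1) - Gc x k := by
  match k with
  | 0 =>
    simp only [aperyTerm2, Gc, Finset.range_zero, Finset.prod_empty, Nat.factorial_zero]
    norm_num
    ring
  | 1 =>
    simp only [aperyTerm2, Gc, Mp]
    simp only [Finset.prod_range_one, Finset.range_zero, Finset.prod_empty,
      Nat.factorial_one, Nat.factorial_zero, Nat.cast_zero, Nat.cast_one, Nat.cast_ofNat]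
    norm_num
    ring
  | (m + 2) =>
    have hf : ((Nat.factorial (m + 2) : ℂ)) ≠ 0 := Nat.cast_ne_zero.2 (Nat.factorial_ne_zero _)
    -- product expansions
    set p := ∏ j ∈ Finset.range m, (x - (j : ℂ)) with hp
    set q := ∏ j ∈ Finset.range m, (x + ((j : ℂ) + 1)) with hq
    set F : ℂ := (Nat.factorial (m + 2) : ℂ) with hF
    have hP1 : ∏ j ∈ Finset.range (m + 1), (x - (j : ℂ)) = p * (x - m) :=
      Finset.prod_range_succ _ _
    have hP2 : ∏ j ∈ Finset.range (m + 2), (x - (j : ℂ)) = p * (x - m) * (x - (m + 1)) := by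
      rw [Finset.prod_range_succ, hP1]; push_cast; ring
    have hP1' : ∏ j ∈ Finset.range (m + 2), (x + 1 - (j : ℂ)) = (x + 1) * (p * (x - m)) := by
      rw [prodP_shift, hP1]
    have hP2' : ∏ j ∈ Finset.range (m + 2), (x + 2 - (j : ℂ)) = (x + 2) * ((x + 1) * p) := by
      have h := prodP_shift (x + 1) (m + 1)
      have h2 := prodP_shift x m
      calc ∏ j ∈ Finset.range (m + 2), (x + 2 - (j : ℂ))
          = ∏ j ∈ Finset.range (m + 2), (x + 1 + 1 - (j : ℂ)) := by
            apply Finset.prod_congr rfl; intro j _; ring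
        _ = (x + 2) * ((x + 1) * p) := by rw [h, h2]; ring
    have hQ1 : ∏ j ∈ Finset.range (m + 1), (x + ((j : ℂ) + 1)) = q * (x + m + 1) := by
      rw [Finset.prod_range_succ]; ring
    have hQ2 : ∏ j ∈ Finset.range (m + 2), (x + ((j : ℂ) + 1))
        = q * (x + m + 1) * (x + m + 2) := by
      rw [Finset.prod_range_succ, hQ1]; push_cast; ring
    have hQ3 : ∏ j ∈ Finset.range (m + 3), (x + ((j : ℂ) + 1))
        = q * (x + m + 1) * (x + m + 2) * (x + m + 3) := by
      rw [Finset.prod_range_succ, hQ2]; push_cast; ring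
    have hQ4 : ∏ j ∈ Finset.range (m + 4), (x + ((j : ℂ) + 1))
        = q * (x + m + 1) * (x + m + 2) * (x + m + 3) * (x + m + 4) := by
      rw [Finset.prod_range_succ, hQ3]; push_cast; ring
    have hQ1' : (x + 1) * ∏ j ∈ Finset.range (m + 2), (x + 1 + ((j : ℂ) + 1))
        = q * (x + m + 1) * (x + m + 2) * (x + m + 3) := by
      rw [prodQ_shift x (m + 2), hQ3]
    have hQ2' : (x + 1) * ((x + 2) * ∏ j ∈ Finset.range (m + 2), (x + 2 + ((j : ℂ) + 1)))
        = q * (x + m + 1) * (x + m + 2) * (x + m + 3) * (x + m + 4) := by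
      have e1 : ∏ j ∈ Finset.range (m + 2), (x + 2 + ((j : ℂ) + 1))
          = ∏ j ∈ Finset.range (m + 2), (x + 1 + 1 + ((j : ℂ) + 1)) := by
        apply Finset.prod_congr rfl; intro j _; ring
      rw [e1, show (x + 2) = (x + 1 + 1) by ring, prodQ_shift (x + 1) (m + 2),
        prodQ_shift x (m + 3), hQ4]
    -- express the five quantities over common denominator F ^ 3
    have hA2 : aperyTerm2 (x + 2) (m + 2) =
        (x + 2) * (x + 1) * p ^ 2 * (q * (x + m + 1) * (x + m + 2) * (x + m + 3) * (x + m + 4))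
          / F ^ 3 := by
      unfold aperyTerm2
      rw [hP2']
      rw [show (∏ j ∈ Finset.range (m + 2), (x + 2 + ((j : ℂ) + 1)))
          = q * (x + m + 1) * (x + m + 2) * (x + m + 3) * (x + m + 4) / ((x + 1) * (x + 2)) by
        rw [eq_div_iff (mul_ne_zero hx1 hx2), ← hQ2']; ring]
      rw [← hF]
      field_simp
    have hA1 : aperyTerm2 (x + 1) (m + 2) =
        (x + 1) * (p * (x - m)) ^ 2 * (q * (x + m + 1) * (x + m + 2) * (x + m + 3)) / F ^ 3 := by
      unfold aperyTerm2
      rw [hP1']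
      rw [show (∏ j ∈ Finset.range (m + 2), (x + 1 + ((j : ℂ) + 1)))
          = q * (x + m + 1) * (x + m + 2) * (x + m + 3) / (x + 1) by
        rw [eq_div_iff hx1, ← hQ1']; ring]
      rw [← hF]
      field_simp
    have hA0 : aperyTerm2 x (m + 2) =
        (p * (x - m) * (x - (m + 1))) ^ 2 * (q * (x + m + 1) * (x + m + 2)) / F ^ 3 := by
      unfold aperyTerm2
      rw [hP2, hQ2, ← hF]
      field_simp
    have hG3 : Gc x (m + 2 + 1) =
        Mp x (m + 3) * (x + m + 3) * (p * (x - m)) ^ 2 *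
          (q * (x + m + 1) * (x + m + 2)) / F ^ 3 := by
      show Gc x ((m + 1) + 2) = _
      simp only [Gc]
      rw [hP1, hQ2, ← hF]
      push_cast
      ring_nf
    have hG2 : Gc x (m + 2) =
        ((m : ℂ) + 2) ^ 3 * (Mp x (m + 2) * (x + m + 2) * p ^ 2 * (q * (x + m + 1))) / F ^ 3 := by
      simp only [Gc]
      rw [hQ1, ← hp]
      have hfac : F = ((m : ℂ) + 2) * (Nat.factorial (m + 1) : ℂ) := by
        rw [hF, Nat.factorial_succ]; push_cast; ring
      have hf1 : ((Nat.factorial (m + 1) : ℂ)) ≠ 0 := Nat.cast_ne_zero.2 (Nat.factorial_ne_zero _)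
      have hm2 : ((m : ℂ) + 2) ≠ 0 := by
        have : ((m + 2 : ℕ) : ℂ) ≠ 0 := Nat.cast_ne_zero.2 (by omega)
        push_cast at this; exact this
      rw [hfac]
      field_simp
    rw [hA2, hA1, hA0, hG3, hG2, div_sub_div_same]
    rw [mul_div_assoc', mul_div_assoc', mul_div_assoc', ← sub_div, ← sub_div]
    congr 1
    unfold Mp
    push_cast
    ring

lemma norm_ratio (x : ℂ) (k : ℕ) :
    ‖aperyTerm2 x (k + 1)‖ =
      ‖aperyTerm2 x k‖ *
        (‖x - (k : ℂ)‖ ^ 2 * ‖x + ((k : ℂ) + 1)‖ / ((k : ℝ) + 1) ^ 3) := by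
  rw [aperyTerm2_ratio, norm_mul, norm_mul, norm_pow, norm_div, norm_div]
  have h : ‖(k : ℂ) + 1‖ = (k : ℝ) + 1 := by
    have : ((k : ℂ) + 1) = ((k + 1 : ℕ) : ℂ) := by push_cast; ring
    rw [this, Complex.norm_natCast]; push_cast; ring
  rw [h]
  have hk : ((k : ℝ) + 1) ≠ 0 := by positivity
  field_simp

lemma norm_sub_nat (x : ℂ) (k : ℕ) :
    ‖x - (k : ℂ)‖ ^ 2 = (x.re - k) ^ 2 + x.im ^ 2 := by
  rw [Complex.sq_norm, Complex.normSq_apply]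
  simp [Complex.sub_re, Complex.sub_im]
  ring

lemma norm_add_nat (x : ℂ) (k : ℕ) :
    ‖x + ((k : ℂ) + 1)‖ = Real.sqrt ((x.re + (k + 1)) ^ 2 + x.im ^ 2) := by
  rw [Complex.norm_def, Complex.normSq_apply]
  congr 1
  simp [Complex.add_re, Complex.add_im]
  ring

open Filter in
lemma ratio_tendsto (x : ℂ) :
    Filter.Tendsto (fun k : ℕ =>
      (1 - ‖x - (k : ℂ)‖ ^ 2 * ‖x + ((k : ℂ) + 1)‖ / ((k : ℝ) + 1) ^ 3) * ((k : ℝ) + 1))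
      Filter.atTop (nhds (x.re + 2)) := by
  set a := x.re with ha
  set b := x.im with hb
  set e : ℕ → ℝ := fun k => ((k : ℝ) + 1)⁻¹ with he
  set S : ℕ → ℝ := fun k => Real.sqrt ((1 + a * e k) ^ 2 + b ^ 2 * (e k) ^ 2) with hS
  set F : ℕ → ℝ := fun k => (1 - (1 + a) * e k) ^ 2 + b ^ 2 * (e k) ^ 2 with hFdef
  -- pointwise identity
  have point : ∀ k : ℕ,
      (1 - ‖x - (k : ℂ)‖ ^ 2 * ‖x + ((k : ℂ) + 1)‖ / ((k : ℝ) + 1) ^ 3) * ((k : ℝ) + 1)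
        = (2 * (1 + a) - ((1 + a) ^ 2 + b ^ 2) * e k)
          + F k * ((-(2 * a) - (a ^ 2 + b ^ 2) * e k) / (1 + S k)) := by
    intro k
    have hu : (0 : ℝ) < (k : ℝ) + 1 := by positivity
    have hu0 : ((k : ℝ) + 1) ≠ 0 := ne_of_gt hu
    have heu : e k * ((k : ℝ) + 1) = 1 := by
      simp only [he]; field_simp
    have hSpos : 0 ≤ S k := Real.sqrt_nonneg _
    have h1S : (1 : ℝ) + S k ≠ 0 := by positivity
    have hsq : (S k) ^ 2 = (1 + a * e k) ^ 2 + b ^ 2 * (e k) ^ 2 :=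
      Real.sq_sqrt (by positivity)
    -- rewrite the norms
    have hnorm1 : ‖x - (k : ℂ)‖ ^ 2 = (a - k) ^ 2 + b ^ 2 := norm_sub_nat x k
    have hnorm2 : ‖x + ((k : ℂ) + 1)‖ = S k * ((k : ℝ) + 1) := by
      rw [norm_add_nat x k]
      have harg : (1 + a * e k) ^ 2 + b ^ 2 * (e k) ^ 2
          = ((a + ((k : ℝ) + 1)) ^ 2 + b ^ 2) * (e k) ^ 2 := by
        have hek : e k = ((k : ℝ) + 1)⁻¹ := rfl
        rw [hek]; field_simp; ring
      rw [hS]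
      show Real.sqrt ((a + ((k:ℝ) + 1)) ^ 2 + b ^ 2) = Real.sqrt _ * ((k:ℝ) + 1)
      rw [harg, Real.sqrt_mul (by positivity), Real.sqrt_sq (by positivity)]
      have hek : e k = ((k : ℝ) + 1)⁻¹ := rfl
      rw [hek]
      field_simp
    have hwF : ‖x - (k : ℂ)‖ ^ 2 * ‖x + ((k : ℂ) + 1)‖ / ((k : ℝ) + 1) ^ 3
        = F k * S k := by
      rw [hnorm1, hnorm2]
      have hFk : F k = ((a - k) ^ 2 + b ^ 2) * (e k) ^ 2 := by
        show (1 - (1 + a) * e k) ^ 2 + b ^ 2 * (e k) ^ 2 = _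
        have hek : e k = ((k : ℝ) + 1)⁻¹ := rfl
        rw [hek]; field_simp; ring
      rw [hFk]
      have hek : e k = ((k : ℝ) + 1)⁻¹ := rfl
      rw [hek]; field_simp
    rw [hwF]
    -- main algebraic identity
    have claim0 : (1 - F k * S k) * (1 + S k)
        = e k * ((2 * (1 + a) - ((1 + a) ^ 2 + b ^ 2) * e k) * (1 + S k)
            + F k * (-(2 * a) - (a ^ 2 + b ^ 2) * e k)) := by
      have hFk : F k = (1 - (1 + a) * e k) ^ 2 + b ^ 2 * (e k) ^ 2 := rfl
      linear_combination (-F k) * hsq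
    have expand : (1 - F k * S k) * ((k : ℝ) + 1) * (1 + S k)
        = ((2 * (1 + a) - ((1 + a) ^ 2 + b ^ 2) * e k)
            + F k * ((-(2 * a) - (a ^ 2 + b ^ 2) * e k) / (1 + S k))) * (1 + S k) := by
      calc (1 - F k * S k) * ((k : ℝ) + 1) * (1 + S k)
          = ((1 - F k * S k) * (1 + S k)) * ((k : ℝ) + 1) := by ring
        _ = (e k * ((k : ℝ) + 1)) * ((2 * (1 + a) - ((1 + a) ^ 2 + b ^ 2) * e k) * (1 + S k)
              + F k * (-(2 * a) - (a ^ 2 + b ^ 2) * e k)) := by rw [claim0]; ring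
        _ = ((2 * (1 + a) - ((1 + a) ^ 2 + b ^ 2) * e k) * (1 + S k)
              + F k * (-(2 * a) - (a ^ 2 + b ^ 2) * e k)) := by rw [heu]; exact one_mul _
        _ = _ := by field_simp
    exact mul_right_cancel₀ h1S expand
  -- now the limit
  have const : ∀ c : ℝ, Filter.Tendsto (fun _ : ℕ => c) Filter.atTop (nhds c) :=
    fun c => tendsto_const_nhds
  have hE : Filter.Tendsto e Filter.atTop (nhds 0) := by
    have := tendsto_one_div_add_atTop_nhds_zero_nat (𝕜 := ℝ)
    simpa [he, one_div] using this
  have h1 : Filter.Tendsto (fun k => 2 * (1 + a) - ((1 + a) ^ 2 + b ^ 2) * e k)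
      Filter.atTop (nhds (2 * (1 + a))) := by
    have := const (2 * (1 + a))
    have h2 := hE.const_mul ((1 + a) ^ 2 + b ^ 2)
    simpa using this.sub h2
  have hFt : Filter.Tendsto (fun k => F k) Filter.atTop (nhds 1) := by
    have h2 : Filter.Tendsto (fun k => (1 - (1 + a) * e k) ^ 2) Filter.atTop (nhds 1) := by
      have := (const ((1:ℝ))).sub
        (hE.const_mul (1 + a))
      simpa using this.pow 2
    have h3 : Filter.Tendsto (fun k => b ^ 2 * (e k) ^ 2) Filter.atTop (nhds 0) := by
      have := (hE.pow 2).const_mul (b ^ 2)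
      simpa using this
    simpa using h2.add h3
  have hSt : Filter.Tendsto (fun k => S k) Filter.atTop (nhds 1) := by
    have h2 : Filter.Tendsto (fun k => (1 + a * e k) ^ 2 + b ^ 2 * (e k) ^ 2)
        Filter.atTop (nhds 1) := by
      have h4 : Filter.Tendsto (fun k => (1 + a * e k) ^ 2) Filter.atTop (nhds 1) := by
        have := (const ((1:ℝ))).add
          (hE.const_mul a)
        simpa using this.pow 2
      have h3 : Filter.Tendsto (fun k => b ^ 2 * (e k) ^ 2) Filter.atTop (nhds 0) := by
        simpa using (hE.pow 2).const_mul (b ^ 2)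
      simpa using h4.add h3
    have := h2.sqrt
    simpa [Real.sqrt_one] using this
  have hB : Filter.Tendsto (fun k => (-(2 * a) - (a ^ 2 + b ^ 2) * e k) / (1 + S k))
      Filter.atTop (nhds (-(2 * a) / 2)) := by
    have hnum : Filter.Tendsto (fun k => -(2 * a) - (a ^ 2 + b ^ 2) * e k)
        Filter.atTop (nhds (-(2 * a))) := by
      have := (const (-(2 * a))).sub
        (hE.const_mul (a ^ 2 + b ^ 2))
      simpa using this
    have hden : Filter.Tendsto (fun k => 1 + S k) Filter.atTop (nhds 2) := by
      have := (const ((1:ℝ))).add hSt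
      norm_num at this
      exact this
    exact hnum.div hden (by norm_num)
  have final := h1.add (hFt.mul hB)
  have hlim : 2 * (1 + a) + 1 * (-(2 * a) / 2) = a + 2 := by ring
  rw [hlim] at final
  exact final.congr (fun k => (point k).symm)

lemma bern (u s : ℝ) (hu : 0 ≤ u) (hs : 0 ≤ s) (hsu : s * u < 1) :
    1 - s * u ≤ (1 + u) ^ (-s) := by
  have h1 : (1 + u) ^ s ≤ Real.exp (u * s) := by
    rw [Real.exp_mul]
    exact Real.rpow_le_rpow (by linarith) (by linarith [Real.add_one_le_exp u]) hs
  have h2 : 1 - s * u ≤ Real.exp (-(u * s)) := by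
    have := Real.add_one_le_exp (-(u * s))
    linarith
  have h3 : Real.exp (-(u * s)) = (Real.exp (u * s))⁻¹ := Real.exp_neg _
  have h4 : (Real.exp (u * s))⁻¹ ≤ ((1 + u) ^ s)⁻¹ := by
    apply inv_anti₀
    · positivity
    · exact h1
  rw [Real.rpow_neg (by linarith)]
  calc 1 - s * u ≤ (Real.exp (u * s))⁻¹ := by rw [← h3]; exact h2
    _ ≤ ((1 + u) ^ s)⁻¹ := h4

lemma event (x : ℂ) (hx : -1 < x.re) :
    ∃ K : ℕ, ∀ k ≥ K,
      ‖aperyTerm2 x (k + 1)‖ * ((k : ℝ) + 2) ^ ((x.re + 3) / 2) ≤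
        ‖aperyTerm2 x k‖ * ((k : ℝ) + 1) ^ ((x.re + 3) / 2) := by
  set s : ℝ := (x.re + 3) / 2 with hsdef
  have hs0 : 0 < s := by simp only [hsdef]; linarith
  have hsa : s < x.re + 2 := by simp only [hsdef]; linarith
  have h1 : ∀ᶠ k : ℕ in Filter.atTop,
      s < (1 - ‖x - (k : ℂ)‖ ^ 2 * ‖x + ((k : ℂ) + 1)‖ / ((k : ℝ) + 1) ^ 3) * ((k : ℝ) + 1) :=
    (ratio_tendsto x).eventually_const_lt hsa
  have h2 : ∀ᶠ k : ℕ in Filter.atTop, s < (k : ℝ) + 1 := by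
    have : ∀ᶠ k : ℕ in Filter.atTop, (⌈s⌉₊ : ℕ) ≤ k := Filter.eventually_ge_atTop _
    filter_upwards [this] with k hk
    calc s ≤ (⌈s⌉₊ : ℝ) := Nat.le_ceil s
      _ ≤ (k : ℝ) := by exact_mod_cast hk
      _ < (k : ℝ) + 1 := by linarith
  obtain ⟨K, hK⟩ := Filter.eventually_atTop.1 (h1.and h2)
  refine ⟨K, fun k hk => ?_⟩
  obtain ⟨hk1, hk2⟩ := hK k hk
  set w : ℝ := ‖x - (k : ℂ)‖ ^ 2 * ‖x + ((k : ℂ) + 1)‖ / ((k : ℝ) + 1) ^ 3 with hwdef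
  have hw0 : 0 ≤ w := by positivity
  have hu0 : (0 : ℝ) < (k : ℝ) + 1 := by positivity
  set u : ℝ := ((k : ℝ) + 1)⁻¹ with hudef
  have hupos : 0 < u := by positivity
  have huk : u * ((k : ℝ) + 1) = 1 := by simp only [hudef]; field_simp
  have hwu : w ≤ 1 - s * u := by nlinarith
  have hsu : s * u < 1 := by nlinarith
  have hb : 1 - s * u ≤ (1 + u) ^ (-s) := bern u s (le_of_lt hupos) (le_of_lt hs0) hsu
  have hwb : w ≤ (1 + u) ^ (-s) := le_trans hwu hb
  have hkey : (1 + u) ^ (-s) * ((k : ℝ) + 2) ^ s = ((k : ℝ) + 1) ^ s := by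
    have h1u : (1 : ℝ) + u = ((k : ℝ) + 2) / ((k : ℝ) + 1) := by
      rw [hudef]; field_simp; ring
    rw [h1u, Real.rpow_neg (by positivity), Real.div_rpow (by positivity) (le_of_lt hu0)]
    have hne : ((k : ℝ) + 2) ^ s ≠ 0 := by positivity
    field_simp
  rw [norm_ratio, ← hwdef]
  calc ‖aperyTerm2 x k‖ * w * ((k : ℝ) + 2) ^ s
      ≤ ‖aperyTerm2 x k‖ * ((1 + u) ^ (-s)) * ((k : ℝ) + 2) ^ s := by
        gcongr
    _ = ‖aperyTerm2 x k‖ * ((1 + u) ^ (-s) * ((k : ℝ) + 2) ^ s) := by ring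
    _ = ‖aperyTerm2 x k‖ * ((k : ℝ) + 1) ^ s := by rw [hkey]

lemma decay (x : ℂ) (hx : -1 < x.re) :
    ∃ C : ℝ, 0 ≤ C ∧ ∃ K : ℕ, ∀ k ≥ K,
      ‖aperyTerm2 x k‖ ≤ C * ((k : ℝ) + 1) ^ (-((x.re + 3) / 2)) := by
  set s : ℝ := (x.re + 3) / 2 with hsdef
  obtain ⟨K, hK⟩ := event x hx
  refine ⟨‖aperyTerm2 x K‖ * ((K : ℝ) + 1) ^ s, by positivity, K, ?_⟩
  have claim : ∀ k ≥ K, ‖aperyTerm2 x k‖ * ((k : ℝ) + 1) ^ s ≤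
      ‖aperyTerm2 x K‖ * ((K : ℝ) + 1) ^ s := by
    intro k hk
    induction k, hk using Nat.le_induction with
    | base => exact le_refl _
    | succ n hn ih =>
        have h1 := hK n hn
        have hcast : ((n + 1 : ℕ) : ℝ) + 1 = (n : ℝ) + 2 := by push_cast; ring
        rw [hcast]
        exact le_trans h1 ih
  intro k hk
  have h2 := claim k hk
  have hpos : (0 : ℝ) < ((k : ℝ) + 1) ^ s := by positivity
  rw [Real.rpow_neg (by positivity)]
  rw [← div_eq_mul_inv, le_div_iff₀ hpos]
  exact h2

lemma summable_norm_aperyTerm2 (x : ℂ) (hx : -1 < x.re) :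
    Summable (fun k : ℕ => ‖aperyTerm2 x k‖) := by
  set s : ℝ := (x.re + 3) / 2 with hsdef
  have hs1 : 1 < s := by simp only [hsdef]; linarith
  obtain ⟨C, hC, K, hK⟩ := decay x hx
  rw [← summable_nat_add_iff K]
  have base : Summable (fun n : ℕ => ((n : ℝ) + 1) ^ (-s)) := by
    have b1 : Summable (fun n : ℕ => ((n : ℝ) ^ s)⁻¹) := Real.summable_nat_rpow_inv.2 hs1
    have b2 : Summable (fun n : ℕ => (((n + 1 : ℕ) : ℝ) ^ s)⁻¹) :=
      (summable_nat_add_iff 1).2 b1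
    apply b2.congr
    intro n
    rw [Real.rpow_neg (by positivity)]
    push_cast
    ring_nf
  have shifted : Summable (fun n : ℕ => C * (((n + K : ℕ) : ℝ) + 1) ^ (-s)) := by
    have := (summable_nat_add_iff K).2 base
    exact this.mul_left C
  apply Summable.of_nonneg_of_le (fun n => norm_nonneg _) _ shifted
  intro n
  exact hK (n + K) (by omega)

set_option maxHeartbeats 1000000 in
lemma Gc_tendsto (x : ℂ) (hx : -1 < x.re) :
    Filter.Tendsto (Gc x) Filter.atTop (nhds 0) := by
  set s : ℝ := (x.re + 3) / 2 with hsdef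
  have hs1 : 1 < s := by simp only [hsdef]; linarith
  obtain ⟨C, hC, K, hK⟩ := decay x hx
  set cM : ℝ := 4 * ‖(1 : ℂ) + x‖ + 2 * ‖(7 : ℂ) + 13 * x + 6 * x ^ 2‖ +
      ‖(30 : ℂ) + 67 * x + 48 * x ^ 2 + 11 * x ^ 3‖ with hcM
  set D : ℝ := cM * ((‖x‖ + 2) * ((‖x‖ + 1) * C)) with hD
  have hbound : ∀ m : ℕ, m ≥ K →
      ‖Gc x (m + 2)‖ ≤ D * (((m : ℝ) + 1) * ((m : ℝ) + 1) ^ (-s)) := by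
    intro m hm
    have hm1 : (0 : ℝ) < (m : ℝ) + 1 := by positivity
    rw [Gc_eq]
    rw [norm_div, norm_mul, norm_mul, norm_mul, norm_pow]
    have hnc : ‖(m : ℂ) + 1‖ = (m : ℝ) + 1 := by
      have : ((m : ℂ) + 1) = ((m + 1 : ℕ) : ℂ) := by push_cast; ring
      rw [this, Complex.norm_natCast]; push_cast; ring
    rw [hnc]
    rw [div_le_iff₀ (by positivity)]
    have hMp : ‖Mp x (m + 2)‖ ≤ cM * ((m : ℝ) + 1) ^ 2 := by
      unfold Mp
      have t1 : ‖(1 + x) * ((m + 2 : ℕ) : ℂ) ^ 2 + (7 + 13 * x + 6 * x ^ 2) * ((m + 2 : ℕ) : ℂ)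
          - (30 + 67 * x + 48 * x ^ 2 + 11 * x ^ 3)‖
          ≤ ‖(1 + x) * ((m + 2 : ℕ) : ℂ) ^ 2‖ + ‖(7 + 13 * x + 6 * x ^ 2) * ((m + 2 : ℕ) : ℂ)‖
            + ‖(30 : ℂ) + 67 * x + 48 * x ^ 2 + 11 * x ^ 3‖ :=
        le_trans (norm_sub_le _ _) (by gcongr; exact norm_add_le _ _)
      have t2 : ‖(1 + x) * ((m + 2 : ℕ) : ℂ) ^ 2‖ = ‖(1 : ℂ) + x‖ * ((m : ℝ) + 2) ^ 2 := by
        rw [norm_mul, norm_pow, Complex.norm_natCast]; push_cast; ring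
      have t3 : ‖(7 + 13 * x + 6 * x ^ 2) * ((m + 2 : ℕ) : ℂ)‖
          = ‖(7 : ℂ) + 13 * x + 6 * x ^ 2‖ * ((m : ℝ) + 2) := by
        rw [norm_mul, Complex.norm_natCast]; push_cast; ring
      rw [t2, t3] at t1
      refine le_trans t1 ?_
      rw [hcM]
      have n1 : (0:ℝ) ≤ ‖(1 : ℂ) + x‖ := norm_nonneg _
      have n2 : (0:ℝ) ≤ ‖(7 : ℂ) + 13 * x + 6 * x ^ 2‖ := norm_nonneg _
      have n3 : (0:ℝ) ≤ ‖(30 : ℂ) + 67 * x + 48 * x ^ 2 + 11 * x ^ 3‖ := norm_nonneg _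
      have n4 : (0:ℝ) ≤ (m : ℝ) := Nat.cast_nonneg m
      nlinarith [mul_nonneg n1 (by nlinarith : (0:ℝ) ≤ 3 * (m:ℝ)^2 + 4 * (m:ℝ)),
        mul_nonneg n2 (by nlinarith : (0:ℝ) ≤ 2 * (m:ℝ)^2 + 3 * (m:ℝ)),
        mul_nonneg n3 (by nlinarith : (0:ℝ) ≤ (m:ℝ)^2 + 2 * (m:ℝ))]
    have h2 : ‖x + (m : ℂ) + 2‖ ≤ (‖x‖ + 2) * ((m : ℝ) + 1) := by
      have t1 : ‖x + (m : ℂ) + 2‖ ≤ ‖x‖ + ‖(m : ℂ) + 2‖ := by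
        calc ‖x + (m : ℂ) + 2‖ = ‖x + ((m : ℂ) + 2)‖ := by ring_nf
          _ ≤ ‖x‖ + ‖(m : ℂ) + 2‖ := norm_add_le _ _
      have t2 : ‖(m : ℂ) + 2‖ = (m : ℝ) + 2 := by
        have : ((m : ℂ) + 2) = ((m + 2 : ℕ) : ℂ) := by push_cast; ring
        rw [this, Complex.norm_natCast]; push_cast; ring
      rw [t2] at t1
      have n4 : (0:ℝ) ≤ (m : ℝ) := Nat.cast_nonneg m
      nlinarith [norm_nonneg x]
    have h1 : ‖x + (m : ℂ) + 1‖ ≤ (‖x‖ + 1) * ((m : ℝ) + 1) := by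
      have t1 : ‖x + (m : ℂ) + 1‖ ≤ ‖x‖ + ‖(m : ℂ) + 1‖ := by
        calc ‖x + (m : ℂ) + 1‖ = ‖x + ((m : ℂ) + 1)‖ := by ring_nf
          _ ≤ ‖x‖ + ‖(m : ℂ) + 1‖ := norm_add_le _ _
      rw [hnc] at t1
      have n4 : (0:ℝ) ≤ (m : ℝ) := Nat.cast_nonneg m
      nlinarith [norm_nonneg x]
    have hT : ‖aperyTerm2 x m‖ ≤ C * ((m : ℝ) + 1) ^ (-s) := hK m hm
    calc ‖Mp x (m + 2)‖ * ‖x + (m : ℂ) + 2‖ * ‖x + (m : ℂ) + 1‖ * ‖aperyTerm2 x m‖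
        ≤ (cM * ((m : ℝ) + 1) ^ 2) * ((‖x‖ + 2) * ((m : ℝ) + 1)) * ((‖x‖ + 1) * ((m : ℝ) + 1))
            * (C * ((m : ℝ) + 1) ^ (-s)) := by
          gcongr <;> positivity
      _ = D * (((m : ℝ) + 1) * ((m : ℝ) + 1) ^ (-s)) * ((m : ℝ) + 1) ^ 3 := by
          rw [hD]; ring
  have hpow : ∀ m : ℕ, ((m : ℝ) + 1) * ((m : ℝ) + 1) ^ (-s) = ((m : ℝ) + 1) ^ (1 - s) := by
    intro m
    rw [Real.rpow_sub (by positivity), Real.rpow_one, Real.rpow_neg (by positivity)]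
    rw [div_eq_mul_inv]
  have gt0 : Filter.Tendsto (fun m : ℕ => D * (((m : ℝ) + 1) * ((m : ℝ) + 1) ^ (-s)))
      Filter.atTop (nhds 0) := by
    have h5 : Filter.Tendsto (fun y : ℝ => y ^ (-(s - 1))) Filter.atTop (nhds 0) :=
      tendsto_rpow_neg_atTop (by linarith)
    have h6 : Filter.Tendsto (fun m : ℕ => (m : ℝ) + 1) Filter.atTop Filter.atTop :=
      Filter.tendsto_atTop_add_const_right _ 1 tendsto_natCast_atTop_atTop
    have h7 := (h5.comp h6).const_mul D
    simp only [Function.comp] at h7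
    have h8 : ∀ m : ℕ, D * (((m : ℝ) + 1) ^ (-(s - 1))) =
        D * (((m : ℝ) + 1) * ((m : ℝ) + 1) ^ (-s)) := by
      intro m
      rw [hpow m]
      congr 1
      congr 1
      ring
    refine Filter.Tendsto.congr (fun m => h8 m) ?_
    simpa using h7
  have h7 : Filter.Tendsto (fun m : ℕ => Gc x (m + 2)) Filter.atTop (nhds 0) :=
    squeeze_zero_norm' (Filter.eventually_atTop.2 ⟨K, hbound⟩) gt0
  exact (Filter.tendsto_add_atTop_iff_nat 2).1 h7


/-- For every `x ∈ ℂ` with `Re(x) > -1`, the series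
`C_D(x) = ∑_k binom(x,k)² binom(x+k,k)` converges absolutely, and `C_D` satisfies
the homogeneous functional equation
`(x+2)² C_D(x+2) − (11x²+33x+25) C_D(x+1) − (x+1)² C_D(x) = 0` there. -/
theorem stmt_18 :
    (∀ x : ℂ, -1 < x.re → Summable (fun k : ℕ => ‖aperyTerm2 x k‖)) ∧
    ∀ x : ℂ, -1 < x.re →
      (x + 2) ^ 2 * CD (x + 2) - (11 * x ^ 2 + 33 * x + 25) * CD (x + 1) -
          (x + 1) ^ 2 * CD x = 0 := by
  refine ⟨fun x hx => summable_norm_aperyTerm2 x hx, fun x hx => ?_⟩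
  have hx1 : x + 1 ≠ 0 := by
    intro h
    have h2 : (x + 1).re = 0 := by rw [h]; simp
    simp only [Complex.add_re, Complex.one_re] at h2
    linarith
  have hx2 : x + 2 ≠ 0 := by
    intro h
    have h2 : (x + 2).re = 0 := by rw [h]; simp
    simp only [Complex.add_re, Complex.re_ofNat] at h2
    linarith
  have hre1 : -1 < (x + 1).re := by
    simp only [Complex.add_re, Complex.one_re]; linarith
  have hre2 : -1 < (x + 2).re := by
    simp only [Complex.add_re, Complex.re_ofNat]; linarith
  have s0 : Summable (fun k : ℕ => aperyTerm2 x k) :=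
    (summable_norm_aperyTerm2 x hx).of_norm
  have s1 : Summable (fun k : ℕ => aperyTerm2 (x + 1) k) :=
    (summable_norm_aperyTerm2 (x + 1) hre1).of_norm
  have s2 : Summable (fun k : ℕ => aperyTerm2 (x + 2) k) :=
    (summable_norm_aperyTerm2 (x + 2) hre2).of_norm
  set L : ℕ → ℂ := fun k => (x + 2) ^ 2 * aperyTerm2 (x + 2) k -
      (11 * x ^ 2 + 33 * x + 25) * aperyTerm2 (x + 1) k -
      (x + 1) ^ 2 * aperyTerm2 x k with hL
  have hSL : Summable L :=
    (((s2.mul_left _).sub (s1.mul_left _)).sub (s0.mul_left _))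
  have htsum : ∑' k, L k = (x + 2) ^ 2 * CD (x + 2) -
      (11 * x ^ 2 + 33 * x + 25) * CD (x + 1) - (x + 1) ^ 2 * CD x := by
    rw [hL]
    rw [Summable.tsum_sub ((s2.mul_left _).sub (s1.mul_left _)) (s0.mul_left _)]
    rw [Summable.tsum_sub (s2.mul_left _) (s1.mul_left _)]
    rw [tsum_mul_left, tsum_mul_left, tsum_mul_left]
    rfl
  have hps : Filter.Tendsto (fun n => ∑ i ∈ Finset.range n, L i) Filter.atTop
      (nhds (∑' k, L k)) := hSL.hasSum.tendsto_sum_nat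
  have htel : ∀ n : ℕ, ∑ i ∈ Finset.range n, L i = Gc x n := by
    intro n
    have h3 : ∑ i ∈ Finset.range n, (Gc x (i + 1) - Gc x i) = Gc x n - Gc x 0 :=
      Finset.sum_range_sub (Gc x) n
    rw [Finset.sum_congr rfl (fun i _ => tele x hx1 hx2 i), h3]
    simp [Gc]
  have hG : Filter.Tendsto (fun n : ℕ => Gc x n) Filter.atTop (nhds (∑' k, L k)) :=
    hps.congr htel
  have hzero : ∑' k, L k = 0 := tendsto_nhds_unique hG (Gc_tendsto x hx)
  rw [htsum] at hzero
  exact hzero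
end

section
/- For every x ∈ ℂ there exists a constant C > 0 such that for all integers k ≥ 1, | binom(x,k)² binom(x+k,k)² − sin²(πx)/(π² k²) | ≤ C/k³. (That is, the summand of the interpolated Apéry series A(x) satisfies binom(x,k)² binom(x+k,k)² = (sin(πx)/(πk))² + O(1/k³) as k → ∞.) -/
open Finset Filter Topology Real

private lemma aux_prod_sub_one_le (f : ℕ → ℂ) (s : Finset ℕ) :
    ‖(∏ i ∈ s, f i) - 1‖ ≤ (∏ i ∈ s, (1 + ‖f i - 1‖)) - 1 := by
  induction s using Finset.cons_induction with
  | empty => simp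
  | cons a s ha ih =>
    rw [Finset.prod_cons, Finset.prod_cons]
    have h1 : (1:ℝ) ≤ ∏ i ∈ s, (1 + ‖f i - 1‖) := by
      calc (1:ℝ) = ∏ i ∈ s, (1:ℝ) := by simp
        _ ≤ ∏ i ∈ s, (1 + ‖f i - 1‖) :=
          Finset.prod_le_prod (fun i _ => zero_le_one) (fun i _ => by linarith [norm_nonneg (f i - 1)])
    have hfa : ‖f a‖ ≤ 1 + ‖f a - 1‖ := by
      calc ‖f a‖ = ‖1 + (f a - 1)‖ := by congr 1; ring
        _ ≤ ‖(1:ℂ)‖ + ‖f a - 1‖ := norm_add_le _ _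
        _ = 1 + ‖f a - 1‖ := by simp
    calc ‖f a * ∏ i ∈ s, f i - 1‖
        = ‖f a * ((∏ i ∈ s, f i) - 1) + (f a - 1)‖ := by congr 1; ring
      _ ≤ ‖f a * ((∏ i ∈ s, f i) - 1)‖ + ‖f a - 1‖ := norm_add_le _ _
      _ = ‖f a‖ * ‖(∏ i ∈ s, f i) - 1‖ + ‖f a - 1‖ := by rw [norm_mul]
      _ ≤ (1 + ‖f a - 1‖) * ((∏ i ∈ s, (1 + ‖f i - 1‖)) - 1) + ‖f a - 1‖ := by
          have := mul_le_mul hfa ih (norm_nonneg _) (by positivity)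
          linarith
      _ = (1 + ‖f a - 1‖) * (∏ i ∈ s, (1 + ‖f i - 1‖)) - 1 := by ring

private lemma aux_prod_le_exp (t : ℕ → ℝ) (s : Finset ℕ) (h : ∀ i ∈ s, 0 ≤ t i) :
    (∏ i ∈ s, (1 + t i)) ≤ Real.exp (∑ i ∈ s, t i) := by
  rw [Real.exp_sum]
  exact Finset.prod_le_prod (fun i hi => by linarith [h i hi])
    (fun i hi => by linarith [Real.add_one_le_exp (t i)])

private lemma aux_sum_Ico' (m : ℕ) : ∀ n, m ≤ n →
    ∑ j ∈ Finset.Ico m n, (1:ℝ)/((j:ℝ)+1)^2 ≤ 2/((m:ℝ)+1) - 2/((n:ℝ)+1) := by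
  intro n hn
  induction n, hn using Nat.le_induction with
  | base => simp
  | succ n hn ih =>
    rw [Finset.sum_Ico_succ_top hn]
    have h1 : (0:ℝ) < (n:ℝ)+1 := by positivity
    have h2 : (0:ℝ) < (n:ℝ)+2 := by positivity
    have key : (1:ℝ)/((n:ℝ)+1)^2 ≤ 2/((n:ℝ)+1) - 2/((n:ℝ)+2) := by
      rw [div_sub_div _ _ (ne_of_gt h1) (ne_of_gt h2),
        div_le_div_iff₀ (by positivity) (by positivity)]
      nlinarith [sq_nonneg ((n:ℝ))]
    push_cast
    have e2 : ((n:ℝ)+1+1) = (n:ℝ)+2 := by ring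
    rw [e2]
    linarith

private lemma aux_sum_Ico (m n : ℕ) :
    ∑ j ∈ Finset.Ico m n, (1:ℝ)/((j:ℝ)+1)^2 ≤ 2/((m:ℝ)+1) := by
  rcases le_or_gt m n with h | h
  · have := aux_sum_Ico' m n h
    have h2 : (0:ℝ) < (n:ℝ)+1 := by positivity
    have : (0:ℝ) ≤ 2/((n:ℝ)+1) := by positivity
    linarith [aux_sum_Ico' m n h]
  · rw [Finset.Ico_eq_empty (by omega)]
    simp
    positivity

private lemma aux_norm_factor (x : ℂ) (j : ℕ) :
    ‖(1:ℂ) - x^2/((j:ℂ)+1)^2 - 1‖ = ‖x‖^2 * (1/((j:ℝ)+1)^2) := by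
  have e : (1:ℂ) - x^2/((j:ℂ)+1)^2 - 1 = -(x^2/((j:ℂ)+1)^2) := by ring
  have hc : ((j:ℂ)+1) = ((j+1:ℕ):ℂ) := by push_cast; ring
  rw [e, norm_neg, norm_div, norm_pow, norm_pow, hc, Complex.norm_natCast]
  push_cast
  ring

private lemma aux_sum_norm (x : ℂ) (m n : ℕ) :
    ∑ j ∈ Finset.Ico m n, ‖(1:ℂ) - x^2/((j:ℂ)+1)^2 - 1‖ ≤ 2*‖x‖^2/((m:ℝ)+1) := by
  calc ∑ j ∈ Finset.Ico m n, ‖(1:ℂ) - x^2/((j:ℂ)+1)^2 - 1‖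
      = ‖x‖^2 * ∑ j ∈ Finset.Ico m n, (1:ℝ)/((j:ℝ)+1)^2 := by
        rw [Finset.mul_sum]; exact Finset.sum_congr rfl fun j _ => aux_norm_factor x j
    _ ≤ ‖x‖^2 * (2/((m:ℝ)+1)) := by
        apply mul_le_mul_of_nonneg_left (aux_sum_Ico m n) (by positivity)
    _ = 2*‖x‖^2/((m:ℝ)+1) := by ring

private lemma aux_bound (x : ℂ) (n : ℕ) :
    ‖∏ j ∈ Finset.range n, ((1:ℂ) - x^2/((j:ℂ)+1)^2)‖ ≤ Real.exp (2*‖x‖^2) := by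
  calc ‖∏ j ∈ Finset.range n, ((1:ℂ) - x^2/((j:ℂ)+1)^2)‖
      ≤ ∏ j ∈ Finset.range n, ‖(1:ℂ) - x^2/((j:ℂ)+1)^2‖ := norm_prod_le _ _
    _ ≤ ∏ j ∈ Finset.range n, (1 + ‖(1:ℂ) - x^2/((j:ℂ)+1)^2 - 1‖) := by
        apply Finset.prod_le_prod (fun j _ => norm_nonneg _)
        intro j _
        calc ‖(1:ℂ) - x^2/((j:ℂ)+1)^2‖ = ‖1 + ((1:ℂ) - x^2/((j:ℂ)+1)^2 - 1)‖ := by congr 1; ring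
          _ ≤ ‖(1:ℂ)‖ + ‖(1:ℂ) - x^2/((j:ℂ)+1)^2 - 1‖ := norm_add_le _ _
          _ = 1 + ‖(1:ℂ) - x^2/((j:ℂ)+1)^2 - 1‖ := by simp
    _ ≤ Real.exp (∑ j ∈ Finset.range n, ‖(1:ℂ) - x^2/((j:ℂ)+1)^2 - 1‖) :=
        aux_prod_le_exp _ _ (fun i _ => norm_nonneg _)
    _ ≤ Real.exp (2*‖x‖^2) := by
        apply Real.exp_le_exp.mpr
        have := aux_sum_norm x 0 n
        rw [← Finset.range_eq_Ico] at this
        simpa using this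

private lemma aux_exp_sub_one (S : ℝ) : Real.exp S - 1 ≤ S * Real.exp S := by
  have h1 := Real.add_one_le_exp (-S)
  rw [Real.exp_neg] at h1
  have h2 := Real.exp_pos S
  have h3 : Real.exp S * (Real.exp S)⁻¹ = 1 := mul_inv_cancel₀ h2.ne'
  nlinarith [mul_le_mul_of_nonneg_left h1 h2.le]

private lemma aux_tail (x : ℂ) (m n : ℕ) (h : m ≤ n) :
    ‖(∏ j ∈ Finset.range n, ((1:ℂ) - x^2/((j:ℂ)+1)^2)) -
      (∏ j ∈ Finset.range m, ((1:ℂ) - x^2/((j:ℂ)+1)^2))‖ ≤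
    Real.exp (2*‖x‖^2) * (2*‖x‖^2/((m:ℝ)+1) * Real.exp (2*‖x‖^2)) := by
  set f : ℕ → ℂ := fun j => (1:ℂ) - x^2/((j:ℂ)+1)^2 with hf
  have hsplit : (∏ j ∈ Finset.range n, f j) =
      (∏ j ∈ Finset.range m, f j) * ∏ j ∈ Finset.Ico m n, f j :=
    (Finset.prod_range_mul_prod_Ico f h).symm
  rw [hsplit]
  have e : (∏ j ∈ Finset.range m, f j) * (∏ j ∈ Finset.Ico m n, f j) -
      (∏ j ∈ Finset.range m, f j) =
      (∏ j ∈ Finset.range m, f j) * ((∏ j ∈ Finset.Ico m n, f j) - 1) := by ring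
  rw [e, norm_mul]
  have hS : ∑ j ∈ Finset.Ico m n, ‖f j - 1‖ ≤ 2*‖x‖^2/((m:ℝ)+1) := aux_sum_norm x m n
  have hS2 : 2*‖x‖^2/((m:ℝ)+1) ≤ 2*‖x‖^2 := by
    apply div_le_self (by positivity)
    have : (0:ℝ) ≤ (m:ℝ) := Nat.cast_nonneg m
    linarith
  have hSnonneg : 0 ≤ ∑ j ∈ Finset.Ico m n, ‖f j - 1‖ :=
    Finset.sum_nonneg fun i _ => norm_nonneg _
  have hQ : ‖(∏ j ∈ Finset.Ico m n, f j) - 1‖ ≤ 2*‖x‖^2/((m:ℝ)+1) * Real.exp (2*‖x‖^2) := by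
    calc ‖(∏ j ∈ Finset.Ico m n, f j) - 1‖
        ≤ (∏ j ∈ Finset.Ico m n, (1 + ‖f j - 1‖)) - 1 := aux_prod_sub_one_le f _
      _ ≤ Real.exp (∑ j ∈ Finset.Ico m n, ‖f j - 1‖) - 1 := by
          linarith [aux_prod_le_exp (fun j => ‖f j - 1‖) (Finset.Ico m n)
            (fun i _ => norm_nonneg _)]
      _ ≤ (∑ j ∈ Finset.Ico m n, ‖f j - 1‖) *
          Real.exp (∑ j ∈ Finset.Ico m n, ‖f j - 1‖) := aux_exp_sub_one _
      _ ≤ 2*‖x‖^2/((m:ℝ)+1) * Real.exp (2*‖x‖^2) := by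
          apply mul_le_mul hS (Real.exp_le_exp.mpr (le_trans hS hS2)) (Real.exp_pos _).le
            (by positivity)
  exact mul_le_mul (aux_bound x m) hQ (norm_nonneg _) (Real.exp_pos _).le

private lemma aux_key (x : ℂ) (m : ℕ) :
    (∏ j ∈ Finset.range (m+1), (x - (j:ℂ))) * (∏ j ∈ Finset.range (m+1), (x + ((j:ℂ) + 1))) =
      (-1)^m * x * (x + ((m:ℂ)+1)) * ((Nat.factorial m : ℂ))^2 *
        ∏ j ∈ Finset.range m, ((1:ℂ) - x^2/((j:ℂ)+1)^2) := by
  rw [Finset.prod_range_succ' (fun j => x - (j:ℂ)) m, Finset.prod_range_succ]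
  have hmid : (∏ j ∈ Finset.range m, (x - ((j:ℕ)+1 : ℕ))) * (∏ j ∈ Finset.range m, (x + ((j:ℂ)+1)))
      = ∏ j ∈ Finset.range m, ((-(((j:ℂ)+1)^2)) * ((1:ℂ) - x^2/((j:ℂ)+1)^2)) := by
    rw [← Finset.prod_mul_distrib]
    apply Finset.prod_congr rfl
    intro j _
    have hj : ((j:ℂ)+1) ≠ 0 := by
      have : ((j:ℂ)+1) = ((j+1:ℕ):ℂ) := by push_cast; ring
      rw [this]
      exact_mod_cast Nat.succ_ne_zero j
    have hc : ((j+1:ℕ):ℂ) = (j:ℂ)+1 := by push_cast; ring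
    rw [hc]
    field_simp
    ring
  have hprodconst : ∏ j ∈ Finset.range m, (-(((j:ℂ)+1)^2)) =
      (-1)^m * ((Nat.factorial m : ℂ))^2 := by
    have h1 : ∏ j ∈ Finset.range m, ((j:ℂ)+1) = (Nat.factorial m : ℂ) := by
      rw [← Finset.prod_range_add_one_eq_factorial m]
      push_cast
      rfl
    calc ∏ j ∈ Finset.range m, (-(((j:ℂ)+1)^2))
        = ∏ j ∈ Finset.range m, ((-1) * (((j:ℂ)+1) * ((j:ℂ)+1))) := by
          apply Finset.prod_congr rfl; intro j _; ring
      _ = (-1)^m * ((∏ j ∈ Finset.range m, ((j:ℂ)+1)) * (∏ j ∈ Finset.range m, ((j:ℂ)+1))) := by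
          rw [Finset.prod_mul_distrib, Finset.prod_mul_distrib, Finset.prod_const, Finset.card_range]
      _ = (-1)^m * ((Nat.factorial m : ℂ))^2 := by rw [h1]; ring
  calc (∏ j ∈ Finset.range m, (x - ((j:ℕ)+1 : ℕ))) * (x - (0:ℕ)) *
        ((∏ j ∈ Finset.range m, (x + ((j:ℂ)+1))) * (x + ((m:ℂ)+1)))
      = ((∏ j ∈ Finset.range m, (x - ((j:ℕ)+1 : ℕ))) * (∏ j ∈ Finset.range m, (x + ((j:ℂ)+1)))) *
        (x * (x + ((m:ℂ)+1))) := by push_cast; ring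
    _ = (∏ j ∈ Finset.range m, ((-(((j:ℂ)+1)^2)) * ((1:ℂ) - x^2/((j:ℂ)+1)^2))) *
        (x * (x + ((m:ℂ)+1))) := by rw [hmid]
    _ = ((-1)^m * ((Nat.factorial m : ℂ))^2 *
          ∏ j ∈ Finset.range m, ((1:ℂ) - x^2/((j:ℂ)+1)^2)) * (x * (x + ((m:ℂ)+1))) := by
        rw [Finset.prod_mul_distrib, hprodconst]
    _ = _ := by ring

private lemma aux_sq (x : ℂ) (m : ℕ) :
    ((∏ j ∈ Finset.range (m+1), (x - (j:ℂ))) / (Nat.factorial (m+1) : ℂ))^2 *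
      ((∏ j ∈ Finset.range (m+1), (x + ((j:ℂ) + 1))) / (Nat.factorial (m+1) : ℂ))^2 =
    x^2 * (x + ((m:ℂ)+1))^2 * (∏ j ∈ Finset.range m, ((1:ℂ) - x^2/((j:ℂ)+1)^2))^2
      / ((m:ℂ)+1)^4 := by
  have hf : (Nat.factorial (m+1) : ℂ) = ((m:ℂ)+1) * (Nat.factorial m : ℂ) := by
    rw [Nat.factorial_succ]; push_cast; ring
  have hm : (Nat.factorial m : ℂ) ≠ 0 := by
    exact_mod_cast (Nat.factorial_pos m).ne'
  have hm1 : ((m:ℂ)+1) ≠ 0 := by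
    have : ((m:ℂ)+1) = ((m+1:ℕ):ℂ) := by push_cast; ring
    rw [this]; exact_mod_cast Nat.succ_ne_zero m
  have expand : ((∏ j ∈ Finset.range (m+1), (x - (j:ℂ))) / (Nat.factorial (m+1) : ℂ))^2 *
      ((∏ j ∈ Finset.range (m+1), (x + ((j:ℂ) + 1))) / (Nat.factorial (m+1) : ℂ))^2 =
      ((∏ j ∈ Finset.range (m+1), (x - (j:ℂ))) *
        (∏ j ∈ Finset.range (m+1), (x + ((j:ℂ) + 1))))^2 / (Nat.factorial (m+1) : ℂ)^4 := by
    ring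
  rw [expand, aux_key x m, hf]
  have h1 : ((-1:ℂ)^m)^2 = 1 := by
    rw [← pow_mul, pow_mul', neg_one_sq, one_pow]
  have h2 : ((-1:ℂ)^m * x * (x + ((m:ℂ)+1)) * ((Nat.factorial m : ℂ))^2 *
      ∏ j ∈ Finset.range m, ((1:ℂ) - x^2/((j:ℂ)+1)^2))^2
      = x^2 * (x + ((m:ℂ)+1))^2 * ((Nat.factorial m : ℂ))^4 *
        (∏ j ∈ Finset.range m, ((1:ℂ) - x^2/((j:ℂ)+1)^2))^2 := by
    calc _ = ((-1:ℂ)^m)^2 * (x^2 * (x + ((m:ℂ)+1))^2 * ((Nat.factorial m : ℂ))^4 *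
        (∏ j ∈ Finset.range m, ((1:ℂ) - x^2/((j:ℂ)+1)^2))^2) := by ring
      _ = _ := by rw [h1, one_mul]
  rw [h2]
  field_simp

/-- For every `x ∈ ℂ` there is a constant `C > 0` such that for all integers `k ≥ 1`,
`| binom(x,k)² binom(x+k,k)² − sin²(πx)/(π²k²) | ≤ C/k³`, where
`binom(x,k) = (∏_{j=0}^{k-1}(x-j))/k!` and `binom(x+k,k) = (∏_{j=1}^{k}(x+j))/k!`;
that is, the summand of the interpolated Apéry series satisfies
`binom(x,k)² binom(x+k,k)² = (sin(πx)/(πk))² + O(1/k³)` as `k → ∞`. -/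
theorem stmt_19 (x : ℂ) :
    ∃ C : ℝ, 0 < C ∧ ∀ k : ℕ, 1 ≤ k →
      ‖((∏ j ∈ Finset.range k, (x - j)) / (Nat.factorial k : ℂ)) ^ 2 *
          ((∏ j ∈ Finset.range k, (x + (j + 1))) / (Nat.factorial k : ℂ)) ^ 2 -
        Complex.sin (Real.pi * x) ^ 2 / ((Real.pi : ℂ) ^ 2 * (k : ℂ) ^ 2)‖ ≤
      C / (k : ℝ) ^ 3 := by
  rcases eq_or_ne x 0 with rfl | hx
  · refine ⟨1, one_pos, fun k hk => ?_⟩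
    have h0 : (∏ j ∈ Finset.range k, ((0:ℂ) - (j:ℂ))) = 0 :=
      Finset.prod_eq_zero (Finset.mem_range.mpr hk) (by simp)
    rw [h0]
    have hkpos : (0:ℝ) < (k:ℝ) := by exact_mod_cast hk
    simp [Complex.sin_zero]
  -- x ≠ 0
  have hπ : ((Real.pi : ℂ)) ≠ 0 := by exact_mod_cast Real.pi_ne_zero
  have hπx : (Real.pi : ℂ) * x ≠ 0 := mul_ne_zero hπ hx
  set a : ℝ := ‖x‖ with ha
  set M : ℝ := Real.exp (2*a^2) with hMdef
  have hM1 : (1:ℝ) ≤ M := Real.one_le_exp (by positivity)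
  have hM0 : (0:ℝ) < M := lt_of_lt_of_le one_pos hM1
  have ha0 : (0:ℝ) < a := norm_pos_iff.mpr hx
  set C₀ : ℝ := a^2 * ((a^2 + 2*a) * M^2 + 4 * a^2 * M^3) with hC
  have hC0 : 0 ≤ C₀ := by positivity
  refine ⟨C₀ + 1, by positivity, fun k hk => ?_⟩
  obtain ⟨m, rfl⟩ : ∃ m, k = m + 1 := ⟨k-1, (Nat.succ_pred_eq_of_pos hk).symm⟩
  set L : ℂ := Complex.sin ((Real.pi : ℂ) * x) / ((Real.pi : ℂ) * x) with hLdef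
  have hL : Filter.Tendsto (fun n : ℕ => ∏ j ∈ Finset.range n, ((1:ℂ) - x^2/((j:ℂ)+1)^2))
      Filter.atTop (nhds L) := by
    have h := (Complex.tendsto_euler_sin_prod x).div_const ((Real.pi : ℂ) * x)
    simpa only [mul_div_cancel_left₀ _ hπx] using h
  have hsin : Complex.sin ((Real.pi : ℂ) * x) = (Real.pi : ℂ) * x * L := by
    rw [hLdef, mul_div_cancel₀ _ hπx]
  set P : ℂ := ∏ j ∈ Finset.range m, ((1:ℂ) - x^2/((j:ℂ)+1)^2) with hPdef
  have hPb : ‖P‖ ≤ M := aux_bound x m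
  have hLb : ‖L‖ ≤ M :=
    le_of_tendsto hL.norm (Filter.Eventually.of_forall (aux_bound x))
  have hPL : ‖L - P‖ ≤ M * (2*a^2/((m:ℝ)+1) * M) := by
    have h1 : Filter.Tendsto
        (fun n : ℕ => (∏ j ∈ Finset.range n, ((1:ℂ) - x^2/((j:ℂ)+1)^2)) - P)
        Filter.atTop (nhds (L - P)) := hL.sub_const P
    refine le_of_tendsto h1.norm ?_
    filter_upwards [Filter.eventually_ge_atTop m] with n hn
    exact aux_tail x m n hn
  have hyr0 : (0:ℝ) < (m:ℝ) + 1 := by positivity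
  have hyr1 : (1:ℝ) ≤ (m:ℝ) + 1 := by
    have : (0:ℝ) ≤ (m:ℝ) := Nat.cast_nonneg m
    linarith
  have hy : ((m:ℂ)+1) ≠ 0 := by
    have : ((m:ℂ)+1) = ((m+1:ℕ):ℂ) := by push_cast; ring
    rw [this]; exact_mod_cast Nat.succ_ne_zero m
  have hny : ‖((m:ℂ)+1)‖ = (m:ℝ)+1 := by
    have : ((m:ℂ)+1) = ((m+1:ℕ):ℂ) := by push_cast; ring
    rw [this, Complex.norm_natCast]; push_cast; ring
  have hterm : Complex.sin ((Real.pi : ℂ) * x) ^ 2 / ((Real.pi : ℂ)^2 * (((m+1:ℕ)):ℂ)^2)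
      = x^2 * L^2 / ((m:ℂ)+1)^2 := by
    rw [hsin]
    have hc : (((m+1:ℕ)):ℂ) = (m:ℂ)+1 := by push_cast; ring
    rw [hc]
    field_simp
  rw [aux_sq x m, hterm]
  have hD : x^2 * (x + ((m:ℂ)+1))^2 * P^2 / ((m:ℂ)+1)^4 - x^2 * L^2 / ((m:ℂ)+1)^2
      = x^2/((m:ℂ)+1)^4 *
        (((x + ((m:ℂ)+1))^2 - ((m:ℂ)+1)^2) * P^2 + ((m:ℂ)+1)^2 * (P^2 - L^2)) := by
    field_simp
    ring
  rw [hD, norm_mul, norm_div, norm_pow, norm_pow, hny, ← ha]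
  have h1 : ‖(x + ((m:ℂ)+1))^2 - ((m:ℂ)+1)^2‖ ≤ ((m:ℝ)+1) * (a^2 + 2*a) := by
    have e : (x + ((m:ℂ)+1))^2 - ((m:ℂ)+1)^2 = x^2 + 2*x*((m:ℂ)+1) := by ring
    rw [e]
    calc ‖x^2 + 2*x*((m:ℂ)+1)‖ ≤ ‖x^2‖ + ‖2*x*((m:ℂ)+1)‖ := norm_add_le _ _
      _ = a^2 + 2*a*((m:ℝ)+1) := by
          rw [norm_pow, norm_mul, norm_mul, hny, ← ha]
          norm_num
      _ ≤ ((m:ℝ)+1)*(a^2+2*a) := by nlinarith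
  have hPL' : ‖P - L‖ ≤ 2*a^2*M^2/((m:ℝ)+1) := by
    rw [norm_sub_rev]
    calc ‖L - P‖ ≤ M * (2*a^2/((m:ℝ)+1) * M) := hPL
      _ = 2*a^2*M^2/((m:ℝ)+1) := by field_simp
  have h2 : ‖P^2 - L^2‖ ≤ (2*a^2*M^2/((m:ℝ)+1)) * (2*M) := by
    have e : P^2 - L^2 = (P - L) * (P + L) := by ring
    rw [e, norm_mul]
    apply mul_le_mul hPL' ?_ (norm_nonneg _) (by positivity)
    calc ‖P + L‖ ≤ ‖P‖ + ‖L‖ := norm_add_le _ _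
      _ ≤ 2*M := by linarith
  have hB : ‖((x + ((m:ℂ)+1))^2 - ((m:ℂ)+1)^2) * P^2 + ((m:ℂ)+1)^2 * (P^2 - L^2)‖
      ≤ ((m:ℝ)+1) * ((a^2 + 2*a) * M^2 + 4*a^2*M^3) := by
    calc ‖((x + ((m:ℂ)+1))^2 - ((m:ℂ)+1)^2) * P^2 + ((m:ℂ)+1)^2 * (P^2 - L^2)‖
        ≤ ‖((x + ((m:ℂ)+1))^2 - ((m:ℂ)+1)^2) * P^2‖ + ‖((m:ℂ)+1)^2 * (P^2 - L^2)‖ :=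
          norm_add_le _ _
      _ = ‖(x + ((m:ℂ)+1))^2 - ((m:ℂ)+1)^2‖ * ‖P‖^2 + ((m:ℝ)+1)^2 * ‖P^2 - L^2‖ := by
          rw [norm_mul, norm_mul, norm_pow, norm_pow, hny]
      _ ≤ (((m:ℝ)+1) * (a^2 + 2*a)) * M^2 +
          ((m:ℝ)+1)^2 * ((2*a^2*M^2/((m:ℝ)+1)) * (2*M)) := by
          have t1 : ‖(x + ((m:ℂ)+1))^2 - ((m:ℂ)+1)^2‖ * ‖P‖^2 ≤ (((m:ℝ)+1) * (a^2 + 2*a)) * M^2 := by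
            apply mul_le_mul h1 ?_ (by positivity) (by positivity)
            have := hPb
            nlinarith [norm_nonneg P]
          have t2 : ((m:ℝ)+1)^2 * ‖P^2 - L^2‖ ≤
              ((m:ℝ)+1)^2 * ((2*a^2*M^2/((m:ℝ)+1)) * (2*M)) :=
            mul_le_mul_of_nonneg_left h2 (by positivity)
          linarith
      _ = ((m:ℝ)+1) * ((a^2 + 2*a) * M^2 + 4*a^2*M^3) := by
          field_simp
          ring
  calc a^2 / ((m:ℝ)+1)^4 *
        ‖((x + ((m:ℂ)+1))^2 - ((m:ℂ)+1)^2) * P^2 + ((m:ℂ)+1)^2 * (P^2 - L^2)‖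
      ≤ a^2 / ((m:ℝ)+1)^4 * (((m:ℝ)+1) * ((a^2 + 2*a) * M^2 + 4*a^2*M^3)) :=
        mul_le_mul_of_nonneg_left hB (by positivity)
    _ = C₀ / ((m:ℝ)+1)^3 := by
        rw [hC]; field_simp
    _ ≤ (C₀ + 1) / ((m:ℝ)+1)^3 := by
        apply div_le_div_of_nonneg_right ?_ (by positivity)
        linarith
    _ = (C₀ + 1) / (((m+1:ℕ)):ℝ)^3 := by push_cast; ring
end
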